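/- arXiv:1007.3034 — 7 statements merged into one kernel-verified Lean document; each statement's English description precedes it below -/
import Mathlib

section
/- Let d ≥ 2 and N ≥ 2 be integers and let v_1, …, v_N ∈ ℝ^d. Let α be a real number with 0 < α < sin(√π · Γ((d−1)/2) / (N(N−1) · Γ(d/2))). Then there exists a unit vector e ∈ ℝ^d such that for all j, k ∈ {1, …, N} one has |⟨v_j − v_k, e⟩| ≥ α · ‖v_j − v_k‖. -/
open Real MeasureTheory Set intervalIntegral

lemma dirsel_key_calc (k : ℕ) (b : ℝ) (hb0 : 0 ≤ b) (hb : b ≤ π/2) :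
    Real.sin b * Real.cos b ^ (k+1) / (k+2) +
      ∫ r in Real.cos b..(1:ℝ), r ^ k * Real.sqrt (1 - r^2) ≤ b / (k+2) := by
  set f : ℝ → ℝ := fun r => r ^ k * Real.sqrt (1 - r^2) with hf_def
  have hfc : Continuous f := by
    apply (continuous_pow k).mul
    exact (continuous_const.sub (continuous_pow 2)).sqrt
  set H : ℝ → ℝ := fun u => ∫ r in (1:ℝ)..u, f r with hH_def
  have hH : ∀ u : ℝ, HasDerivAt H (f u) u := by
    intro u
    exact integral_hasDerivAt_right (hfc.intervalIntegrable _ _)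
      (hfc.stronglyMeasurableAtFilter _ _) hfc.continuousAt
  set G : ℝ → ℝ := fun x =>
    x / (k+2) - Real.sin x * Real.cos x ^ (k+1) / (k+2) + H (Real.cos x) with hG_def
  have hG : ∀ x : ℝ, HasDerivAt G
      (1/(k+2) - (Real.cos x * Real.cos x ^ (k+1)
        + Real.sin x * ((k+1) * Real.cos x ^ k * (-Real.sin x))) / (k+2)
        + f (Real.cos x) * (-Real.sin x)) x := by
    intro x
    have h1 : HasDerivAt (fun x : ℝ => x / (k+2)) (1/(k+2)) x := by
      simpa using (hasDerivAt_id x).div_const (k+2)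
    have h2 : HasDerivAt (fun x => Real.sin x * Real.cos x ^ (k+1))
        (Real.cos x * Real.cos x ^ (k+1)
          + Real.sin x * ((k+1) * Real.cos x ^ k * (-Real.sin x))) x := by
      have := (Real.hasDerivAt_sin x).mul ((Real.hasDerivAt_cos x).pow (k+1))
      exact this.congr_deriv (by simp)
    have h3 : HasDerivAt (fun x => H (Real.cos x)) (f (Real.cos x) * (-Real.sin x)) x :=
      (hH (Real.cos x)).comp x (Real.hasDerivAt_cos x)
    exact ((h1.sub (h2.div_const (k+2))).add h3).congr_deriv (by ring)
  have hGd : Differentiable ℝ G := fun x => (hG x).differentiableAt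
  have hmono : MonotoneOn G (Icc 0 b) := by
    apply monotoneOn_of_deriv_nonneg (convex_Icc 0 b) hGd.continuous.continuousOn
      hGd.differentiableOn
    intro x hx
    rw [interior_Icc, mem_Ioo] at hx
    have hx2 : x < π/2 := lt_of_lt_of_le hx.2 hb
    have hsx : 0 ≤ Real.sin x := Real.sin_nonneg_of_nonneg_of_le_pi hx.1.le
      (le_trans hx2.le (by linarith [Real.pi_pos]))
    have hcx0 : 0 ≤ Real.cos x := Real.cos_nonneg_of_mem_Icc
      ⟨by linarith [Real.pi_pos, hx.1], hx2.le⟩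
    have hcx1 : Real.cos x ≤ 1 := Real.cos_le_one x
    rw [(hG x).deriv]
    have hsq : Real.sqrt (1 - Real.cos x ^ 2) = Real.sin x := by
      rw [show (1 : ℝ) - Real.cos x ^ 2 = Real.sin x ^ 2 by
        nlinarith [Real.sin_sq_add_cos_sq x], Real.sqrt_sq hsx]
    simp only [hf_def, hsq]
    have hpow : Real.cos x ^ k ≤ 1 := pow_le_one₀ hcx0 hcx1
    have hpyth := Real.sin_sq_add_cos_sq x
    have hk2 : (0:ℝ) < (k:ℝ) + 2 := by positivity
    have key : 1/((k:ℝ)+2) - (Real.cos x * Real.cos x ^ (k+1)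
        + Real.sin x * ((k+1) * Real.cos x ^ k * (-Real.sin x))) / ((k:ℝ)+2)
        + Real.cos x ^ k * Real.sin x * (-Real.sin x)
        = (1 - Real.cos x ^ k) / ((k:ℝ)+2) := by
      field_simp
      ring_nf
      nlinarith [hpyth]
    rw [key]
    apply div_nonneg (by linarith) hk2.le
  have hG0 : G 0 = 0 := by
    simp [hG_def, hH_def, Real.sin_zero, Real.cos_zero, intervalIntegral.integral_same]
  have hGb : 0 ≤ G b := by
    rw [← hG0]
    exact hmono ⟨le_refl 0, hb0⟩ ⟨hb0, le_refl b⟩ hb0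
  have hint : (∫ r in Real.cos b..(1:ℝ), r ^ k * Real.sqrt (1 - r^2)) = - H (Real.cos b) := by
    rw [hH_def]
    simp only
    rw [intervalIntegral.integral_symm]
  have hGb' : 0 ≤ b / (k+2) - Real.sin b * Real.cos b ^ (k+1) / (k+2) + H (Real.cos b) := hGb
  rw [hint]
  linarith

lemma dirsel_radial (k : ℕ) (α : ℝ) (hα0 : 0 < α) (hα1 : α < 1) :
    ∫ r in Ioi (0:ℝ), r ^ k • (2 * min (α / Real.sqrt (1 - α^2) * r) (Real.sqrt (1 - r^2)))
      ≤ 2 * Real.arcsin α / (k+2) := by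
  set γ := α / Real.sqrt (1 - α^2) with hγ_def
  set c := Real.sqrt (1 - α^2) with hc_def
  have hα2 : (0:ℝ) < 1 - α^2 := by nlinarith
  have hc0 : 0 < c := Real.sqrt_pos.2 hα2
  have hcsq : c ^ 2 = 1 - α ^ 2 := Real.sq_sqrt hα2.le
  have hc1 : c ≤ 1 := by nlinarith [hc0]
  have hγ0 : 0 < γ := div_pos hα0 hc0
  have hγc : γ * c = α := by rw [hγ_def]; field_simp
  have hγ2c2 : γ^2 * c^2 = α^2 := by rw [← mul_pow, hγc]
  set g : ℝ → ℝ := fun r => r ^ k * (2 * min (γ * r) (Real.sqrt (1 - r^2))) with hg_def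
  have hgc : Continuous g := by
    apply (continuous_pow k).mul
    apply continuous_const.mul
    exact ((continuous_const.mul continuous_id).min
      ((continuous_const.sub (continuous_pow 2)).sqrt))
  have hg0 : ∀ r ∈ Ioi (1:ℝ), g r = 0 := by
    intro r hr
    have hr1 : (1:ℝ) < r := hr
    have : Real.sqrt (1 - r^2) = 0 := Real.sqrt_eq_zero'.2 (by nlinarith)
    rw [hg_def]
    simp only
    rw [this, min_eq_right (by positivity)]
    ring
  have hioi : ∫ r in Ioi (0:ℝ), r ^ k • (2 * min (γ * r) (Real.sqrt (1 - r^2)))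
      = ∫ r in Ioc (0:ℝ) 1, g r := by
    simp only [smul_eq_mul, ← hg_def]
    rw [← Set.Ioc_union_Ioi_eq_Ioi (zero_le_one : (0:ℝ) ≤ 1),
      setIntegral_union (Set.Ioc_disjoint_Ioi le_rfl) measurableSet_Ioi
        ((hgc.continuousOn.integrableOn_compact isCompact_Icc).mono_set
          Set.Ioc_subset_Icc_self)
        ((integrableOn_congr_fun hg0 measurableSet_Ioi).2 (integrableOn_zero))]
    rw [add_eq_left]
    rw [setIntegral_congr_fun measurableSet_Ioi hg0]
    simp
  rw [hioi, ← intervalIntegral.integral_of_le (zero_le_one : (0:ℝ) ≤ 1)]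
  rw [← intervalIntegral.integral_add_adjacent_intervals
    (hgc.intervalIntegrable 0 c) (hgc.intervalIntegrable c 1)]
  have hpiece1 : (∫ r in (0:ℝ)..c, g r) = 2 * γ * (c^(k+2)) / (k+2) := by
    rw [show (∫ r in (0:ℝ)..c, g r) = ∫ r in (0:ℝ)..c, (2*γ) * r^(k+1) by
      apply intervalIntegral.integral_congr
      intro r hr
      rw [Set.uIcc_of_le hc0.le] at hr
      rw [hg_def]
      simp only
      rw [min_eq_left ?_]
      · ring
      · rw [Real.le_sqrt (mul_nonneg hγ0.le hr.1) (by nlinarith [hr.1, hr.2])]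
        have hr2 : r^2 ≤ c^2 := by nlinarith [hr.1, hr.2]
        nlinarith [mul_le_mul_of_nonneg_left hr2 (sq_nonneg γ)]]
    rw [intervalIntegral.integral_const_mul, integral_pow]
    push_cast
    ring
  have hpiece2 : (∫ r in c..(1:ℝ), g r) = 2 * ∫ r in c..(1:ℝ), r^k * Real.sqrt (1-r^2) := by
    rw [← intervalIntegral.integral_const_mul]
    apply intervalIntegral.integral_congr
    intro r hr
    rw [Set.uIcc_of_le hc1] at hr
    rw [hg_def]
    simp only
    rw [min_eq_right ?_]
    · ring
    · calc Real.sqrt (1 - r^2) ≤ Real.sqrt ((γ*r)^2) := by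
            apply Real.sqrt_le_sqrt
            nlinarith [hr.1, hr.2, mul_le_mul_of_nonneg_left
              (mul_self_le_mul_self hc0.le hr.1) (sq_nonneg γ), sq_nonneg (γ*r)]
          _ = γ * r := Real.sqrt_sq (by nlinarith [hr.1])
  have hkey := dirsel_key_calc k (Real.arcsin α)
    (Real.arcsin_nonneg.2 hα0.le) (Real.arcsin_le_pi_div_two α)
  rw [Real.sin_arcsin (by linarith) hα1.le, Real.cos_arcsin, ← hc_def] at hkey
  rw [hpiece1, hpiece2]
  have hac : α * c^(k+1) = γ * c^(k+2) := by
    rw [← hγc]; ring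
  have hk2 : (0:ℝ) < (k:ℝ) + 2 := by positivity
  have h2 : 2*γ*c^(k+2)/((k:ℝ)+2) = 2*(α*c^(k+1)/((k:ℝ)+2)) := by rw [hac]; ring
  have h3 : 2*Real.arcsin α/((k:ℝ)+2) = 2*(Real.arcsin α/((k:ℝ)+2)) := by ring
  rw [h2, h3]
  linarith [hkey]

lemma dirsel_volC (k : ℕ) (α : ℝ) (hα0 : 0 < α) (hα1 : α < 1) :
    volume {y : EuclideanSpace ℝ (Fin (k+2)) | ‖y‖ < 1 ∧ |y 0| < α * ‖y‖} ≤
      ENNReal.ofReal (((k:ℝ)+1) *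
        (volume (Metric.ball (0 : EuclideanSpace ℝ (Fin (k+1))) 1)).toReal *
        (2 * Real.arcsin α / (k+2))) := by
  set γ := α / Real.sqrt (1 - α^2) with hγ_def
  have hα2 : (0:ℝ) < 1 - α^2 := by nlinarith
  have hγ0 : 0 < γ := div_pos hα0 (Real.sqrt_pos.2 hα2)
  -- Step 1 : to the pi measure
  set C₁ : Set (Fin (k+2) → ℝ) :=
    {y | ∑ i, y i^2 < 1 ∧ (y 0)^2 < α^2 * ∑ i, y i^2} with hC₁_def
  have hm1 : Measurable fun y : Fin (k+2) → ℝ => ∑ i, y i^2 :=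
    Finset.measurable_sum _ fun i _ => (measurable_pi_apply i).pow_const 2
  have hC₁m : MeasurableSet C₁ :=
    (measurableSet_lt hm1 measurable_const).inter
      (measurableSet_lt ((measurable_pi_apply 0).pow_const 2) (hm1.const_mul (α^2)))
  have hstep1 : volume {y : EuclideanSpace ℝ (Fin (k+2)) | ‖y‖ < 1 ∧ |y 0| < α * ‖y‖}
      = volume C₁ := by
    rw [← (EuclideanSpace.volume_preserving_symm_measurableEquiv_toLp (Fin (k+2))).measure_preimage
      hC₁m.nullMeasurableSet]
    congr 1
    ext x
    have hS : (0:ℝ) ≤ ∑ i, x i ^ 2 := by positivity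
    have hnorm : ‖x‖ = Real.sqrt (∑ i, x i ^ 2) := by
      rw [EuclideanSpace.norm_eq]
      simp_rw [Real.norm_eq_abs, sq_abs]
    simp only [mem_preimage, hC₁_def, mem_setOf_eq]
    have he : ∀ i, (MeasurableEquiv.toLp 2 (Fin (k+2) → ℝ)).symm x i = x i := fun i => rfl
    simp only [he]
    constructor
    · rintro ⟨h1, h2⟩
      rw [hnorm] at h1 h2
      constructor
      · rwa [Real.sqrt_lt' one_pos, one_pow] at h1
      · have := (Real.lt_sqrt (abs_nonneg (x 0))).1
          (by rwa [← Real.sqrt_sq hα0.le, ← Real.sqrt_mul (sq_nonneg α)] at h2)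
        rwa [sq_abs] at this
    · rintro ⟨h1, h2⟩
      rw [hnorm]
      constructor
      · rwa [Real.sqrt_lt' one_pos, one_pow]
      · rw [← Real.sqrt_sq hα0.le, ← Real.sqrt_mul (sq_nonneg α)]
        rw [Real.lt_sqrt (abs_nonneg (x 0)), sq_abs]
        exact h2
  -- Step 2 : split off the first coordinate
  set C₂ : Set (ℝ × (Fin (k+1) → ℝ)) :=
    {q | q.1^2 + ∑ i, q.2 i^2 < 1 ∧ q.1^2 < α^2 * (q.1^2 + ∑ i, q.2 i^2)} with hC₂_def
  have hm2 : Measurable fun q : ℝ × (Fin (k+1) → ℝ) => q.1^2 + ∑ i, q.2 i^2 :=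
    (measurable_fst.pow_const 2).add
      (Finset.measurable_sum _ fun i _ => ((measurable_pi_apply i).comp measurable_snd).pow_const 2)
  have hC₂m : MeasurableSet C₂ :=
    (measurableSet_lt hm2 measurable_const).inter
      (measurableSet_lt (measurable_fst.pow_const 2) (hm2.const_mul (α^2)))
  have hstep2 : volume C₁ = volume C₂ := by
    rw [← (volume_preserving_piFinSuccAbove (fun _ : Fin (k+2) => ℝ) 0).measure_preimage
      hC₂m.nullMeasurableSet]
    congr 1
    ext y
    simp only [mem_preimage, MeasurableEquiv.piFinSuccAbove_apply, hC₁_def, hC₂_def,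
      mem_setOf_eq]
    rw [Fin.sum_univ_succAbove (fun i => y i ^ 2) 0]
    rfl
  -- Step 3 : Fubini, sections in the first variable
  have hstep3 : volume C₂ = ∫⁻ z : Fin (k+1) → ℝ,
      ENNReal.ofReal (2 * min (γ * Real.sqrt (∑ i, z i^2)) (Real.sqrt (1 - ∑ i, z i^2))) := by
    rw [Measure.volume_eq_prod, Measure.prod_apply_symm hC₂m]
    congr 1
    ext z
    have hS : (0:ℝ) ≤ ∑ i, z i ^ 2 := by positivity
    set S := ∑ i, z i ^ 2 with hS_def
    have hc : γ^2 * (1 - α^2) = α^2 := by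
      rw [hγ_def, div_pow, Real.sq_sqrt hα2.le]; field_simp
    have hcS : γ^2*(1-α^2)*S = α^2*S := by rw [hc]
    have hsect : (fun t => (t, z)) ⁻¹' C₂ =
        Ioo (-(min (γ * Real.sqrt S) (Real.sqrt (1 - S))))
          (min (γ * Real.sqrt S) (Real.sqrt (1 - S))) := by
      ext t
      rw [mem_preimage, mem_Ioo, ← abs_lt, lt_min_iff]
      have e1 : |t| < γ * Real.sqrt S ↔ t^2 < α^2 * (t^2 + S) := by
        rw [show γ * Real.sqrt S = Real.sqrt (γ^2 * S) by
            rw [Real.sqrt_mul (sq_nonneg γ), Real.sqrt_sq hγ0.le],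
          Real.lt_sqrt (abs_nonneg t), sq_abs]
        constructor
        · intro h
          nlinarith [(mul_lt_mul_iff_left₀ hα2).2 h, hcS]
        · intro h
          have h' : t^2*(1-α^2) < (γ^2*S)*(1-α^2) := by nlinarith [h, hcS]
          exact (mul_lt_mul_iff_left₀ hα2).1 h'
      have e2 : |t| < Real.sqrt (1 - S) ↔ t^2 + S < 1 := by
        rw [Real.lt_sqrt (abs_nonneg t), sq_abs]
        constructor <;> intro h <;> linarith
      rw [e1, e2]
      exact Iff.trans (by rfl) (and_comm)
    rw [hsect, Real.volume_Ioo]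
    congr 1
    ring
  -- Step 4 : back to Euclidean space, radial function
  have hstep4 : (∫⁻ z : Fin (k+1) → ℝ,
      ENNReal.ofReal (2 * min (γ * Real.sqrt (∑ i, z i^2)) (Real.sqrt (1 - ∑ i, z i^2))))
      = ∫⁻ x : EuclideanSpace ℝ (Fin (k+1)),
          ENNReal.ofReal (2 * min (γ * ‖x‖) (Real.sqrt (1 - ‖x‖^2))) := by
    rw [← (EuclideanSpace.volume_preserving_symm_measurableEquiv_toLp (Fin (k+1))).lintegral_comp
      (by fun_prop)]
    apply lintegral_congr
    intro x
    have he : ∀ i, (MeasurableEquiv.toLp 2 (Fin (k+1) → ℝ)).symm x i = x i := fun i => rfl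
    simp only [he]
    have hS : (0:ℝ) ≤ ∑ i, x i ^ 2 := by positivity
    have hnorm : ‖x‖ = Real.sqrt (∑ i, x i ^ 2) := by
      rw [EuclideanSpace.norm_eq]
      simp_rw [Real.norm_eq_abs, sq_abs]
    rw [hnorm, Real.sq_sqrt hS]
  -- Step 5/6 : compute the lintegral via the radial formula
  set f₀ : ℝ → ℝ := fun r => 2 * min (γ * r) (Real.sqrt (1 - r^2)) with hf₀_def
  have hf₀c : Continuous f₀ := continuous_const.mul
    ((continuous_const.mul continuous_id).min
      ((continuous_const.sub (continuous_pow 2)).sqrt))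
  have hcomp : Continuous fun x : EuclideanSpace ℝ (Fin (k+1)) => f₀ ‖x‖ :=
    hf₀c.comp continuous_norm
  have hnn : ∀ x : EuclideanSpace ℝ (Fin (k+1)), 0 ≤ f₀ ‖x‖ := fun x =>
    mul_nonneg (by norm_num)
      (le_min (mul_nonneg hγ0.le (norm_nonneg x)) (Real.sqrt_nonneg _))
  have hK : HasCompactSupport fun x : EuclideanSpace ℝ (Fin (k+1)) => f₀ ‖x‖ := by
    apply HasCompactSupport.intro (isCompact_closedBall (0 : EuclideanSpace ℝ (Fin (k+1))) 1)
    intro x hx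
    have hx1 : 1 < ‖x‖ := by
      by_contra h
      exact hx (Metric.mem_closedBall.2 (by rw [dist_zero_right]; exact not_lt.1 h))
    have hz : Real.sqrt (1 - ‖x‖^2) = 0 := Real.sqrt_eq_zero'.2 (by nlinarith)
    rw [hf₀_def]
    simp only
    rw [hz, min_eq_right (mul_nonneg hγ0.le (norm_nonneg x))]
    ring
  have hInt : Integrable fun x : EuclideanSpace ℝ (Fin (k+1)) => f₀ ‖x‖ :=
    hcomp.integrable_of_hasCompactSupport hK
  have hstep5 : (∫⁻ x : EuclideanSpace ℝ (Fin (k+1)),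
      ENNReal.ofReal (2 * min (γ * ‖x‖) (Real.sqrt (1 - ‖x‖^2))))
      = ENNReal.ofReal (∫ x : EuclideanSpace ℝ (Fin (k+1)), f₀ ‖x‖) :=
    (ofReal_integral_eq_lintegral_ofReal hInt (ae_of_all _ hnn)).symm
  have hrad := MeasureTheory.integral_fun_norm_addHaar
    (volume : Measure (EuclideanSpace ℝ (Fin (k+1)))) f₀
  simp only [finrank_euclideanSpace_fin, Nat.add_sub_cancel] at hrad
  have hI := dirsel_radial k α hα0 hα1
  rw [← hγ_def] at hI
  have hI0 : (∫ r in Ioi (0:ℝ), r ^ k • f₀ r) ≤ 2 * Real.arcsin α / (k+2) := hI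
  rw [hstep1, hstep2, hstep3, hstep4, hstep5, hrad]
  apply ENNReal.ofReal_le_ofReal
  rw [nsmul_eq_mul, smul_eq_mul]
  push_cast
  rw [mul_assoc]
  exact mul_le_mul_of_nonneg_left
    (mul_le_mul_of_nonneg_left hI0 ENNReal.toReal_nonneg) (by positivity)

lemma dirsel_card (N : ℕ) :
    2 * (Finset.univ.filter (fun p : Fin N × Fin N => p.1 < p.2)).card = N * N - N := by
  set T := Finset.univ.filter (fun p : Fin N × Fin N => p.1 < p.2) with hT
  set T' := Finset.univ.filter (fun p : Fin N × Fin N => p.2 < p.1) with hT'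
  have hcard : T.card = T'.card := by
    refine Finset.card_bij' (fun p _ => (p.2, p.1)) (fun p _ => (p.2, p.1)) ?_ ?_ ?_ ?_ <;>
        intro p hp <;>
        simp only [hT, hT', Finset.mem_filter, Finset.mem_univ, true_and, Prod.mk.eta] at hp ⊢ <;>
        first
          | rfl
          | exact hp
  have hunion : T ∪ T' = Finset.univ.filter (fun p : Fin N × Fin N => p.1 ≠ p.2) := by
    rw [← Finset.filter_or]
    exact Finset.filter_congr fun p _ => ne_iff_lt_or_gt.symm
  have hdisj : Disjoint T T' := by
    rw [Finset.disjoint_left]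
    intro p hp hp'
    simp only [hT, hT', Finset.mem_filter, Finset.mem_univ, true_and] at hp hp'
    exact absurd hp' (not_lt.2 hp.le)
  have hoff : Finset.univ.filter (fun p : Fin N × Fin N => p.1 ≠ p.2)
      = (Finset.univ : Finset (Fin N)).offDiag := by
    ext p
    simp [Finset.mem_offDiag]
  have h2 : T.card + T'.card = N * N - N := by
    rw [← Finset.card_union_of_disjoint hdisj, hunion, hoff, Finset.offDiag_card]
    simp
  omega

set_option maxHeartbeats 1000000 in
theorem direction_selection
    (d N : ℕ) (hd : 2 ≤ d) (hN : 2 ≤ N)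
    (v : Fin N → EuclideanSpace ℝ (Fin d))
    (α : ℝ) (hα0 : 0 < α)
    (hα : α < Real.sin (Real.sqrt Real.pi * Real.Gamma (((d : ℝ) - 1) / 2) /
        ((N : ℝ) * ((N : ℝ) - 1) * Real.Gamma ((d : ℝ) / 2)))) :
    ∃ e : EuclideanSpace ℝ (Fin d), ‖e‖ = 1 ∧
      ∀ j k : Fin N, |(inner ℝ (v j - v k) e : ℝ)| ≥ α * ‖v j - v k‖ := by
  obtain ⟨k, rfl⟩ : ∃ k, d = k + 2 := ⟨d - 2, by omega⟩
  clear hd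
  have hN2 : (2:ℝ) ≤ (N:ℝ) := by exact_mod_cast hN
  have hΓ1 : 0 < Real.Gamma (((k:ℝ)+1)/2) := Real.Gamma_pos_of_pos (by positivity)
  have hΓ2 : 0 < Real.Gamma (((k:ℝ)+2)/2) := Real.Gamma_pos_of_pos (by positivity)
  have hπ : 0 < Real.sqrt Real.pi := Real.sqrt_pos.2 Real.pi_pos
  have hcast1 : ((k+2 : ℕ) : ℝ) - 1 = (k:ℝ) + 1 := by push_cast; ring
  have hcast2 : ((k+2 : ℕ) : ℝ) = (k:ℝ) + 2 := by push_cast; ring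
  rw [hcast1, hcast2] at hα
  set c0 : ℝ := Real.sqrt Real.pi * Real.Gamma (((k:ℝ)+1)/2) /
      ((N:ℝ) * ((N:ℝ) - 1) * Real.Gamma (((k:ℝ)+2)/2)) with hc0_def
  have hc0pos : 0 < c0 := by
    apply div_pos (mul_pos hπ hΓ1)
    apply mul_pos (mul_pos (by linarith) (by linarith)) hΓ2
  have hα1 : α < 1 := lt_of_lt_of_le hα (Real.sin_le_one _)
  set β := Real.arcsin α with hβ_def
  have hβ0 : 0 < β := Real.arcsin_pos.2 hα0
  have hβ2 : β < π/2 := Real.arcsin_lt_pi_div_two.2 hα1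
  have hβc : β < c0 := by
    rcases le_or_gt c0 (π/2) with h | h
    · have h1 : α ∈ Icc (-1:ℝ) 1 := ⟨by linarith, hα1.le⟩
      have h2 : Real.sin c0 ∈ Icc (-1:ℝ) 1 := ⟨Real.neg_one_le_sin _, Real.sin_le_one _⟩
      have := Real.strictMonoOn_arcsin h1 h2 hα
      rwa [Real.arcsin_sin (by linarith) h] at this
    · exact lt_trans hβ2 h
  -- bad sets
  set w : Fin N × Fin N → EuclideanSpace ℝ (Fin (k+2)) := fun p => v p.1 - v p.2 with hw_def
  set Bad : Fin N × Fin N → Set (EuclideanSpace ℝ (Fin (k+2))) :=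
    fun p => {x | ‖x‖ < 1 ∧ |(inner ℝ (w p) x : ℝ)| < α * (‖w p‖ * ‖x‖)} with hBad_def
  have hCm : MeasurableSet {y : EuclideanSpace ℝ (Fin (k+2)) | ‖y‖ < 1 ∧ |y 0| < α * ‖y‖} := by
    have h1 : MeasurableSet {y : EuclideanSpace ℝ (Fin (k+2)) | ‖y‖ < 1} :=
      measurableSet_lt continuous_norm.measurable measurable_const
    have h2 : MeasurableSet {y : EuclideanSpace ℝ (Fin (k+2)) | |y 0| < α * ‖y‖} :=
      measurableSet_lt
        (((continuous_apply (0 : Fin (k+2))).comp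
          (PiLp.continuous_ofLp (p := 2) (β := fun _ : Fin (k+2) => ℝ))).abs.measurable)
        ((continuous_const.mul continuous_norm).measurable)
    exact h1.inter h2
  set Vm : ℝ := (volume (Metric.ball (0 : EuclideanSpace ℝ (Fin (k+1))) 1)).toReal with hVm_def
  set bound : ℝ := ((k:ℝ)+1) * Vm * (2 * β / (k+2)) with hbound_def
  have hBadLe : ∀ p : Fin N × Fin N, volume (Bad p) ≤ ENNReal.ofReal bound := by
    intro p
    rcases eq_or_ne (w p) 0 with h0 | h0
    · have hBe : Bad p = ∅ := by
        ext x
        simp [hBad_def, h0]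
      rw [hBe]
      simp
    · have hwn : 0 < ‖w p‖ := norm_pos_iff.2 h0
      set u : EuclideanSpace ℝ (Fin (k+2)) := ‖w p‖⁻¹ • w p with hu_def
      have hun : ‖u‖ = 1 := by
        rw [hu_def, norm_smul, Real.norm_eq_abs, abs_of_pos (inv_pos.2 hwn)]
        field_simp
      have horth : Orthonormal ℝ (({0} : Set (Fin (k+2))).restrict (fun _ => u)) := by
        rw [orthonormal_iff_ite]
        intro i j
        have hij : i = j := Subtype.ext (by
          have hi := i.2; have hj := j.2
          simp only [Set.mem_singleton_iff] at hi hj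
          rw [hi, hj])
        simp only [hij, if_true, Set.restrict_apply]
        rw [real_inner_self_eq_norm_sq, show ‖({0} : Set (Fin (k+2))).restrict (fun _ => u) j‖ = 1 from hun]
        norm_num
      obtain ⟨b, hb⟩ := horth.exists_orthonormalBasis_extension_of_card_eq
        (by simp only [Fintype.card_fin]; exact finrank_euclideanSpace_fin)
      have hb0 : b 0 = u := hb 0 rfl
      have hpre : Bad p = b.repr ⁻¹'
          {y : EuclideanSpace ℝ (Fin (k+2)) | ‖y‖ < 1 ∧ |y 0| < α * ‖y‖} := by
        ext x
        simp only [hBad_def, mem_setOf_eq, mem_preimage]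
        rw [b.repr.norm_map]
        have h0' : (b.repr x) 0 = (inner ℝ u x : ℝ) := by
          rw [← hb0]; exact b.repr_apply_apply x 0
        have hwx : (inner ℝ (w p) x : ℝ) = ‖w p‖ * (inner ℝ u x : ℝ) := by
          rw [hu_def, real_inner_smul_left]
          field_simp
        rw [h0', hwx, abs_mul, abs_of_pos hwn,
          show α * (‖w p‖ * ‖x‖) = ‖w p‖ * (α * ‖x‖) by ring, mul_lt_mul_iff_right₀ hwn]
      rw [hpre, (b.measurePreserving_repr).measure_preimage hCm.nullMeasurableSet,
        hbound_def, hVm_def, hβ_def]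
      exact dirsel_volC k α hα0 hα1
  -- assemble
  set T := Finset.univ.filter (fun p : Fin N × Fin N => p.1 < p.2) with hT_def
  have hTcard : (T.card : ℝ) = ((N:ℝ) * (N:ℝ) - (N:ℝ)) / 2 := by
    have h2 := dirsel_card N
    have hNN : N ≤ N * N := Nat.le_mul_of_pos_left N (by omega)
    rw [← hT_def] at h2
    have h3 : ((2 * T.card : ℕ) : ℝ) = ((N*N - N : ℕ) : ℝ) := by
      exact_mod_cast congrArg (Nat.cast : ℕ → ℝ) h2
    push_cast [Nat.cast_sub hNN] at h3
    linarith
  set U := ⋃ p ∈ T, Bad p with hU_def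
  have hUle : volume U ≤ ENNReal.ofReal ((T.card : ℝ) * bound) := by
    refine le_trans (measure_biUnion_finset_le T Bad) ?_
    calc ∑ p ∈ T, volume (Bad p) ≤ ∑ _p ∈ T, ENNReal.ofReal bound :=
          Finset.sum_le_sum fun p _ => hBadLe p
      _ = T.card • ENNReal.ofReal bound := by rw [Finset.sum_const]
      _ = ENNReal.ofReal ((T.card : ℝ) * bound) := by
          rw [nsmul_eq_mul, ← ENNReal.ofReal_natCast T.card,
            ← ENNReal.ofReal_mul (Nat.cast_nonneg T.card)]
  have hVm : Vm = Real.sqrt π ^ (k+1) / Real.Gamma (((k:ℝ)+1)/2 + 1) := by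
    rw [hVm_def, EuclideanSpace.volume_ball]
    simp only [Fintype.card_fin, ENNReal.ofReal_one, one_pow, one_mul]
    rw [ENNReal.toReal_ofReal (by positivity)]
    push_cast
    ring_nf
  have hball : volume (Metric.ball (0 : EuclideanSpace ℝ (Fin (k+2))) 1)
      = ENNReal.ofReal (Real.sqrt π ^ (k+2) / Real.Gamma (((k:ℝ)+2)/2 + 1)) := by
    rw [show (volume (Metric.ball (0 : EuclideanSpace ℝ (Fin (k+2))) 1)) =
        volume (Metric.ball (0 : EuclideanSpace ℝ (Fin (k+2))) 1) from rfl,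
      EuclideanSpace.volume_ball]
    simp only [Fintype.card_fin, ENNReal.ofReal_one, one_pow, one_mul]
    congr 2
    push_cast
    ring_nf
  have hΓ1' : 0 < Real.Gamma (((k:ℝ)+1)/2 + 1) := Real.Gamma_pos_of_pos (by positivity)
  have hΓ2' : 0 < Real.Gamma (((k:ℝ)+2)/2 + 1) := Real.Gamma_pos_of_pos (by positivity)
  set vd : ℝ := Real.sqrt π ^ (k+2) / Real.Gamma (((k:ℝ)+2)/2 + 1) with hvd_def
  have hvd0 : 0 < vd := div_pos (pow_pos hπ _) hΓ2'
  have hVm0 : 0 < Vm := by rw [hVm]; exact div_pos (pow_pos hπ _) hΓ1'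
  have hg1 : Real.Gamma (((k:ℝ)+1)/2 + 1) = (((k:ℝ)+1)/2) * Real.Gamma (((k:ℝ)+1)/2) :=
    Real.Gamma_add_one (by positivity)
  have hg2 : Real.Gamma (((k:ℝ)+2)/2 + 1) = (((k:ℝ)+2)/2) * Real.Gamma (((k:ℝ)+2)/2) :=
    Real.Gamma_add_one (by positivity)
  set A : ℝ := ((N:ℝ)*(N:ℝ)-(N:ℝ))/2 * (((k:ℝ)+1) * Vm * (2/((k:ℝ)+2))) with hA_def
  have hA0 : 0 < A := by
    apply mul_pos
    · nlinarith
    · exact mul_pos (mul_pos (by positivity) hVm0) (by positivity)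
  have hN0 : (N:ℝ) ≠ 0 := by linarith
  have hN1 : (N:ℝ) - 1 ≠ 0 := by linarith
  have hk1 : ((k:ℝ)+1) ≠ 0 := by positivity
  have hk2 : ((k:ℝ)+2) ≠ 0 := by positivity
  have hkey : c0 * A = vd := by
    rw [hA_def, hc0_def, hvd_def, hVm, hg1, hg2]
    rw [show Real.sqrt π ^ (k+2) = Real.sqrt π ^ (k+1) * Real.sqrt π by ring]
    field_simp
  have hTbound : (T.card : ℝ) * bound = β * A := by
    rw [hTcard, hbound_def, hA_def]; ring
  have hstrict : ENNReal.ofReal ((T.card:ℝ) * bound) < volume (Metric.ball (0 : EuclideanSpace ℝ (Fin (k+2))) 1) := by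
    rw [hball]
    rw [ENNReal.ofReal_lt_ofReal_iff hvd0]
    rw [hTbound, ← hkey]
    exact (mul_lt_mul_iff_left₀ hA0).2 hβc
  have hfull : volume (U ∪ {(0 : EuclideanSpace ℝ (Fin (k+2)))}) < volume (Metric.ball (0 : EuclideanSpace ℝ (Fin (k+2))) 1) := by
    apply lt_of_le_of_lt (measure_union_le U {0})
    have h0 : volume ({(0 : EuclideanSpace ℝ (Fin (k+2)))} : Set (EuclideanSpace ℝ (Fin (k+2)))) = 0 := measure_singleton 0
    rw [h0, add_zero]
    exact lt_of_le_of_lt hUle hstrict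
  have hexists : ∃ x, x ∈ Metric.ball (0 : EuclideanSpace ℝ (Fin (k+2))) 1 ∧ x ∉ U ∪ {(0 : EuclideanSpace ℝ (Fin (k+2)))} := by
    by_contra h
    push_neg at h
    exact absurd (measure_mono fun y hy => h y hy) (not_le.2 hfull)
  obtain ⟨x, hxball, hxout⟩ := hexists
  have hx0 : x ≠ 0 := fun h => hxout (mem_union_right _ (by simp [h]))
  have hnx : 0 < ‖x‖ := norm_pos_iff.2 hx0
  have hx1 : ‖x‖ < 1 := mem_ball_zero_iff.1 hxball
  have hgood : ∀ p : Fin N × Fin N, p.1 < p.2 →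
      α * (‖w p‖ * ‖x‖) ≤ |(inner ℝ (w p) x : ℝ)| := by
    intro p hp
    by_contra h
    push_neg at h
    have hxB : x ∈ Bad p := ⟨hx1, h⟩
    have hpT : p ∈ T := by rw [hT_def]; exact Finset.mem_filter.2 ⟨Finset.mem_univ p, hp⟩
    apply hxout
    apply mem_union_left
    rw [hU_def]
    exact Set.mem_iUnion₂.2 ⟨p, hpT, hxB⟩
  refine ⟨‖x‖⁻¹ • x, ?_, ?_⟩
  · rw [norm_smul, Real.norm_eq_abs, abs_of_pos (inv_pos.2 hnx)]
    field_simp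
  · have key : ∀ p : Fin N × Fin N, p.1 < p.2 →
        α * ‖w p‖ ≤ |(inner ℝ (w p) (‖x‖⁻¹ • x) : ℝ)| := by
      intro p hp
      rw [real_inner_smul_right, abs_mul, abs_of_pos (inv_pos.2 hnx)]
      calc α * ‖w p‖ = ‖x‖⁻¹ * (α * (‖w p‖ * ‖x‖)) := by field_simp
        _ ≤ ‖x‖⁻¹ * |(inner ℝ (w p) x : ℝ)| :=
            mul_le_mul_of_nonneg_left (hgood p hp) (inv_pos.2 hnx).le
    intro j k'
    rcases lt_trichotomy j k' with h | h | h
    · have h1 := key (j, k') h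
      rw [hw_def] at h1
      exact h1
    · rw [h, sub_self]
      simp
    · have h2 := key (k', j) h
      rw [hw_def] at h2
      have hww : v j - v k' = -(v k' - v j) := (neg_sub _ _).symm
      rw [ge_iff_le, hww, inner_neg_left, abs_neg, norm_neg]
      exact h2
end

section
/- Let d ≥ 2 and M ≥ 1 be integers and let u_1, …, u_M ∈ ℝ^d be unit vectors. Let α ∈ (0, 1) satisfy arcsin(α) < √π · Γ((d−1)/2) / (2M · Γ(d/2)). Then there exists a unit vector w ∈ ℝ^d such that |⟨u_i, w⟩| > α for every i ∈ {1, …, M}. -/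
open Real MeasureTheory Set Metric intervalIntegral
open scoped ENNReal

set_option maxHeartbeats 1000000

lemma sqrt_pow_deriv (k : ℕ) {α t : ℝ} (hα1 : α < 1) (hα0 : 0 < α) (ht : t ∈ Set.Icc (-α) α) :
    HasDerivAt (fun t : ℝ => (((k:ℝ)+1) * Real.arcsin t + t * (Real.sqrt (1 - t^2))^(k+1)) / ((k:ℝ)+2))
      ((((k:ℝ)+1) + (Real.sqrt (1-t^2))^(k+2) - ((k:ℝ)+1)*t^2*(Real.sqrt (1-t^2))^k)
        / (Real.sqrt (1-t^2) * ((k:ℝ)+2))) t := by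
  obtain ⟨ht1, ht2⟩ := ht
  have htl : -1 < t := by linarith
  have htr : t < 1 := by linarith
  have hpos : 0 < 1 - t^2 := by nlinarith
  have hs0 : 0 < Real.sqrt (1 - t^2) := Real.sqrt_pos.mpr hpos
  have hsq : Real.sqrt (1-t^2) ^ 2 = 1 - t^2 := Real.sq_sqrt hpos.le
  have h1 : HasDerivAt (fun t : ℝ => 1 - t^2) (-(2*t)) t := by
    simpa using ((hasDerivAt_pow 2 t).const_sub 1)
  have hq : HasDerivAt (fun t : ℝ => Real.sqrt (1 - t^2)) (1/(2*Real.sqrt (1-t^2)) * -(2*t)) t :=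
    (Real.hasDerivAt_sqrt hpos.ne').comp t h1
  have hqm : HasDerivAt (fun t : ℝ => (Real.sqrt (1 - t^2))^(k+1))
      (((k:ℝ)+1) * (Real.sqrt (1-t^2))^k * (1/(2*Real.sqrt (1-t^2)) * -(2*t))) t := by
    simpa using hq.fun_pow (k+1)
  have harc : HasDerivAt Real.arcsin (1/Real.sqrt (1-t^2)) t := by
    simpa using Real.hasDerivAt_arcsin htl.ne' htr.ne
  have := ((harc.const_mul ((k:ℝ)+1)).fun_add ((hasDerivAt_id' t).fun_mul hqm)).div_const ((k:ℝ)+2)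
  refine this.congr_deriv ?_
  field_simp
  ring_nf

lemma integral_sqrt_pow_le (k : ℕ) {α : ℝ} (hα0 : 0 < α) (hα1 : α < 1) :
    ∫ t in (-α)..α, (Real.sqrt (1 - t^2))^(k+1)
      ≤ (2*((k:ℝ)+1)*Real.arcsin α + 2*α*(Real.sqrt (1-α^2))^(k+1)) / ((k:ℝ)+2) := by
  set H' : ℝ → ℝ := fun t => (((k:ℝ)+1) + (Real.sqrt (1-t^2))^(k+2) - ((k:ℝ)+1)*t^2*(Real.sqrt (1-t^2))^k)
        / (Real.sqrt (1-t^2) * ((k:ℝ)+2)) with hH'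
  have hαα : -α ≤ α := by linarith
  have hconts : Continuous fun t : ℝ => Real.sqrt (1 - t^2) := by
    exact (continuous_const.sub (continuous_pow 2)).sqrt
  have hne : ∀ t ∈ Set.Icc (-α) α, Real.sqrt (1 - t^2) ≠ 0 := by
    intro t ht
    obtain ⟨ht1, ht2⟩ := ht
    have : 0 < 1 - t^2 := by nlinarith
    exact (Real.sqrt_pos.mpr this).ne'
  have hcont : ContinuousOn H' (Set.Icc (-α) α) := by
    apply ContinuousOn.div
    · fun_prop
    · fun_prop
    · intro t ht
      exact mul_ne_zero (hne t ht) (by positivity)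
  have hicc : Set.uIcc (-α) α = Set.Icc (-α) α := Set.uIcc_of_le hαα
  have hint : IntervalIntegrable H' volume (-α) α :=
    (hcont.mono (by rw [hicc])).intervalIntegrable
  have heq : ∫ t in (-α)..α, H' t
      = ((((k:ℝ)+1) * Real.arcsin α + α * (Real.sqrt (1 - α^2))^(k+1)) / ((k:ℝ)+2))
      - ((((k:ℝ)+1) * Real.arcsin (-α) + (-α) * (Real.sqrt (1 - (-α)^2))^(k+1)) / ((k:ℝ)+2)) := by
    apply intervalIntegral.integral_eq_sub_of_hasDerivAt
    · intro t ht
      exact sqrt_pow_deriv k hα1 hα0 (hicc ▸ ht)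
    · exact hint
  have hmono : ∫ t in (-α)..α, (Real.sqrt (1 - t^2))^(k+1) ≤ ∫ t in (-α)..α, H' t := by
    apply intervalIntegral.integral_mono_on hαα
    · exact ((hconts.pow (k+1)).continuousOn).intervalIntegrable
    · exact hint
    · intro t ht
      obtain ⟨ht1, ht2⟩ := ht
      have hpos : 0 < 1 - t^2 := by nlinarith
      set s := Real.sqrt (1 - t^2) with hs
      have hs0 : 0 < s := Real.sqrt_pos.mpr hpos
      have hs1 : s ≤ 1 := by
        have := Real.sqrt_le_sqrt (show 1 - t^2 ≤ 1 by nlinarith)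
        simpa [hs] using this
      have hsq : s ^ 2 = 1 - t^2 := Real.sq_sqrt hpos.le
      rw [hH', le_div_iff₀ (by positivity)]
      have hkey : s^k * (s^2 + t^2) ≤ 1 := by
        rw [hsq]; ring_nf
        exact pow_le_one₀ hs0.le hs1
      have e1 : s^(k+1) * (s * ((k:ℝ)+2)) = ((k:ℝ)+2) * (s^(k+2)) := by ring
      have e2 : s^(k+2) = s^k * s^2 := by ring
      nlinarith [pow_nonneg hs0.le k, pow_nonneg hs0.le (k+2), sq_nonneg t]
  rw [heq] at hmono
  calc ∫ t in (-α)..α, (Real.sqrt (1 - t^2))^(k+1) ≤ _ := hmono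
    _ ≤ _ := by
        rw [Real.arcsin_neg, neg_sq]
        ring_nf
        exact le_refl _

lemma integral_abs_pow_eq (k : ℕ) {α c : ℝ} (hα0 : 0 < α) :
    ∫ t in (-α)..α, (|t| *c)^(k+1) = 2*α^(k+2)*c^(k+1)/((k:ℝ)+2) := by
  have h0 : ∫ t in (0:ℝ)..α, (|t| *c)^(k+1) = α^(k+2)*c^(k+1)/((k:ℝ)+2) := by
    have : ∫ t in (0:ℝ)..α, (|t| *c)^(k+1) = ∫ t in (0:ℝ)..α, t^(k+1)*c^(k+1) := by
      apply intervalIntegral.integral_congr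
      intro t ht
      rw [Set.uIcc_of_le hα0.le] at ht
      simp only [mul_pow, abs_of_nonneg ht.1]
    rw [this, intervalIntegral.integral_mul_const, integral_pow]
    push_cast
    ring
  have hneg : ∫ t in (-α)..(0:ℝ), (|t| *c)^(k+1) = ∫ t in (0:ℝ)..α, (|t| *c)^(k+1) := by
    have := intervalIntegral.integral_comp_neg (a := (0:ℝ)) (b := α) (fun t => (|t| *c)^(k+1))
    simpa [abs_neg] using this.symm
  have hi : IntervalIntegrable (fun t => (|t| *c)^(k+1)) volume (-α) 0 :=
    (((continuous_abs.mul continuous_const).pow (k+1)).continuousOn).intervalIntegrable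
  have hi2 : IntervalIntegrable (fun t => (|t| *c)^(k+1)) volume 0 α :=
    (((continuous_abs.mul continuous_const).pow (k+1)).continuousOn).intervalIntegrable
  rw [← intervalIntegral.integral_add_adjacent_intervals hi hi2, hneg, h0]
  ring

lemma integral_g_le (k : ℕ) {α : ℝ} (hα0 : 0 < α) (hα1 : α < 1) :
    ∫ t in (-α)..α, ((Real.sqrt (1-t^2))^(k+1) - (|t| *(Real.sqrt (1-α^2)/α))^(k+1))
      ≤ 2*((k:ℝ)+1)*Real.arcsin α/((k:ℝ)+2) := by
  have hc1 : Continuous fun t : ℝ => (Real.sqrt (1 - t^2))^(k+1) :=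
    ((continuous_const.sub (continuous_pow 2)).sqrt).pow _
  have hc2 : Continuous fun t : ℝ => (|t| *(Real.sqrt (1-α^2)/α))^(k+1) :=
    (continuous_abs.mul continuous_const).pow _
  rw [intervalIntegral.integral_sub (hc1.continuousOn.intervalIntegrable)
    (hc2.continuousOn.intervalIntegrable)]
  have hB := integral_abs_pow_eq k (c := Real.sqrt (1-α^2)/α) hα0
  rw [hB]
  have hA := integral_sqrt_pow_le k hα0 hα1
  have hq : 0 ≤ Real.sqrt (1-α^2) := Real.sqrt_nonneg _
  have he : 2*α^(k+2)*(Real.sqrt (1-α^2)/α)^(k+1)/((k:ℝ)+2)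
      = 2*α*(Real.sqrt (1-α^2))^(k+1)/((k:ℝ)+2) := by
    rw [div_pow]
    field_simp
    ring
  rw [he]
  have : ∫ t in (-α)..α, (Real.sqrt (1 - t^2))^(k+1)
      ≤ (2*((k:ℝ)+1)*Real.arcsin α + 2*α*(Real.sqrt (1-α^2))^(k+1)) / ((k:ℝ)+2) := hA
  have hkpos : (0:ℝ) < (k:ℝ)+2 := by positivity
  rw [sub_le_iff_le_add, ← add_div]
  exact this

lemma slice_vol (k : ℕ) {α t : ℝ} (hα0 : 0 < α) (hα1 : α < 1) :
    volume {z : Fin (k+1) → ℝ | t^2 + ∑ j, z j^2 ≤ 1 ∧ t^2 ≤ α^2 * (t^2 + ∑ j, z j^2)}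
      ≤ Set.indicator (Set.Icc (-α) α)
        (fun t => ENNReal.ofReal ((Real.sqrt π ^ (k+1) / Real.Gamma (((k:ℝ)+1)/2 + 1)) *
          ((Real.sqrt (1-t^2))^(k+1) - (|t| * (Real.sqrt (1-α^2)/α))^(k+1)))) t := by
  have hV : 0 < Real.sqrt π ^ (k+1) / Real.Gamma (((k:ℝ)+1)/2 + 1) := by
    apply div_pos
    · have := Real.sqrt_pos.mpr Real.pi_pos
      positivity
    · exact Real.Gamma_pos_of_pos (by positivity)
  by_cases ht : t ∈ Set.Icc (-α) α
  · rw [Set.indicator_of_mem ht]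
    obtain ⟨ht1, ht2⟩ := ht
    have habs : t^2 ≤ α^2 := by nlinarith
    set R := Real.sqrt (1-t^2) with hR
    set r := |t| * (Real.sqrt (1-α^2)/α) with hr
    have hr0 : 0 ≤ r := by positivity
    have hr2 : r^2 = t^2 * (1-α^2)/α^2 := by
      rw [hr, mul_pow, div_pow, sq_abs, Real.sq_sqrt (by nlinarith : (0:ℝ) ≤ 1-α^2)]
      ring
    have hrR : r ≤ R := by
      rw [hR, show r = Real.sqrt (r^2) from (Real.sqrt_sq hr0).symm]
      apply Real.sqrt_le_sqrt
      rw [hr2, div_le_iff₀ (by positivity : (0:ℝ) < α^2)]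
      nlinarith
    set ψ := (MeasurableEquiv.toLp 2 (Fin (k+1) → ℝ)).symm.symm
    have hψ : ∀ z : Fin (k+1) → ℝ, ‖ψ z‖ = Real.sqrt (∑ j, z j^2) := by
      intro z
      rw [EuclideanSpace.norm_eq]
      simp [ψ, MeasurableEquiv.symm_symm, MeasurableEquiv.coe_toLp, Real.norm_eq_abs, sq_abs]
    have hsub : {z : Fin (k+1) → ℝ | t^2 + ∑ j, z j^2 ≤ 1 ∧ t^2 ≤ α^2 * (t^2 + ∑ j, z j^2)}
        ⊆ ψ ⁻¹' (closedBall 0 R \ ball 0 r) := by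
      intro z hz
      obtain ⟨hz1, hz2⟩ := hz
      have hQ0 : (0:ℝ) ≤ ∑ j, z j^2 := Finset.sum_nonneg fun j _ => sq_nonneg _
      constructor
      · rw [mem_closedBall, dist_zero_right, hψ, hR]
        exact Real.sqrt_le_sqrt (by linarith)
      · rw [mem_ball, dist_zero_right, not_lt, hψ]
        rw [Real.le_sqrt hr0]
        rw [hr2, div_le_iff₀ (by positivity : (0:ℝ) < α^2)]
        · nlinarith
        · exact hQ0
    calc volume {z : Fin (k+1) → ℝ | t^2 + ∑ j, z j^2 ≤ 1 ∧ t^2 ≤ α^2 * (t^2 + ∑ j, z j^2)}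
        ≤ volume (ψ ⁻¹' (closedBall 0 R \ ball 0 r)) := measure_mono hsub
      _ = volume (closedBall (0 : EuclideanSpace ℝ (Fin (k+1))) R \ ball 0 r) := by
          exact (MeasurePreserving.symm _
            (EuclideanSpace.volume_preserving_symm_measurableEquiv_toLp (Fin (k+1)))).measure_preimage
            ((measurableSet_closedBall.diff measurableSet_ball).nullMeasurableSet)
      _ ≤ _ := by
          rw [measure_diff (ball_subset_closedBall.trans (closedBall_subset_closedBall hrR))
            measurableSet_ball.nullMeasurableSet measure_ball_lt_top.ne]
          rw [EuclideanSpace.volume_closedBall, EuclideanSpace.volume_ball]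
          simp only [Fintype.card_fin]
          push_cast
          rw [← ENNReal.ofReal_pow (by positivity : (0:ℝ) ≤ R),
            ← ENNReal.ofReal_pow hr0,
            ← ENNReal.ofReal_mul (by positivity), ← ENNReal.ofReal_mul (by positivity),
            ← ENNReal.ofReal_sub _ (mul_nonneg (by positivity) hV.le)]
          apply ENNReal.ofReal_le_ofReal
          apply le_of_eq
          push_cast
          ring
  · rw [Set.indicator_of_notMem ht]
    have hempty : {z : Fin (k+1) → ℝ | t^2 + ∑ j, z j^2 ≤ 1 ∧ t^2 ≤ α^2 * (t^2 + ∑ j, z j^2)}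
        = ∅ := by
      ext z
      simp only [Set.mem_setOf_eq, Set.mem_empty_iff_false, iff_false]
      rintro ⟨h1, h2⟩
      apply ht
      have hQ0 : (0:ℝ) ≤ ∑ j, z j^2 := Finset.sum_nonneg fun j _ => sq_nonneg _
      have hta : t^2 ≤ α^2 := by nlinarith
      constructor
      · nlinarith
      · nlinarith
    rw [hempty]
    simp

lemma band_vol (k : ℕ) {α : ℝ} (hα0 : 0 < α) (hα1 : α < 1) :
    volume {y : Fin (k+2) → ℝ | ∑ i, y i^2 ≤ 1 ∧ (y 0)^2 ≤ α^2 * ∑ i, y i^2}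
      ≤ ENNReal.ofReal ((Real.sqrt π ^ (k+1) / Real.Gamma (((k:ℝ)+1)/2 + 1)) *
          (2*((k:ℝ)+1)*Real.arcsin α/((k:ℝ)+2))) := by
  have hV : 0 < Real.sqrt π ^ (k+1) / Real.Gamma (((k:ℝ)+1)/2 + 1) := by
    apply div_pos
    · have := Real.sqrt_pos.mpr Real.pi_pos
      positivity
    · exact Real.Gamma_pos_of_pos (by positivity)
  set V : ℝ := Real.sqrt π ^ (k+1) / Real.Gamma (((k:ℝ)+1)/2 + 1) with hVdef
  set g : ℝ → ℝ := fun t => (Real.sqrt (1-t^2))^(k+1) - (|t| * (Real.sqrt (1-α^2)/α))^(k+1)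
    with hg
  set e := MeasurableEquiv.piFinSuccAbove (fun _ : Fin (k+2) => ℝ) 0 with he
  set T : Set (ℝ × (Fin (k+1) → ℝ)) :=
    {p | p.1^2 + ∑ j, p.2 j^2 ≤ 1 ∧ p.1^2 ≤ α^2 * (p.1^2 + ∑ j, p.2 j^2)} with hT
  have hm1 : Measurable fun p : ℝ × (Fin (k+1) → ℝ) => p.1^2 + ∑ j, p.2 j^2 := by
    apply Measurable.add
    · fun_prop
    · apply Finset.measurable_sum
      intro j _
      fun_prop
  have hTmeas : MeasurableSet T := by
    rw [hT, Set.setOf_and]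
    exact (measurableSet_le hm1 measurable_const).inter
      (measurableSet_le (by fun_prop) (hm1.const_mul _))
  have hset : {y : Fin (k+2) → ℝ | ∑ i, y i^2 ≤ 1 ∧ (y 0)^2 ≤ α^2 * ∑ i, y i^2}
      = e ⁻¹' T := by
    ext y
    have hsum : ∑ i, y i ^2 = y 0 ^2 + ∑ j, y ((0 : Fin (k+2)).succAbove j)^2 :=
      Fin.sum_univ_succAbove (fun i => y i ^ 2) 0
    simp only [Set.mem_setOf_eq, Set.mem_preimage, he, hT,
      MeasurableEquiv.piFinSuccAbove_apply, Fin.insertNthEquiv_symm_apply, Fin.removeNth]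
    rw [hsum]
  have hMP := volume_preserving_piFinSuccAbove (fun _ : Fin (k+2) => ℝ) 0
  rw [hset, hMP.measure_preimage hTmeas.nullMeasurableSet]
  have hprod : (volume : Measure (ℝ × (Fin (k+1) → ℝ))) = (volume : Measure ℝ).prod volume :=
    rfl
  rw [hprod, Measure.prod_apply hTmeas]
  have hslice : ∀ t : ℝ, volume (Prod.mk t ⁻¹' T)
      ≤ Set.indicator (Set.Icc (-α) α) (fun t => ENNReal.ofReal (V * g t)) t := by
    intro t
    have : Prod.mk t ⁻¹' T
        = {z : Fin (k+1) → ℝ | t^2 + ∑ j, z j^2 ≤ 1 ∧ t^2 ≤ α^2 * (t^2 + ∑ j, z j^2)} := rfl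
    rw [this]
    exact slice_vol k hα0 hα1
  calc ∫⁻ t, volume (Prod.mk t ⁻¹' T)
      ≤ ∫⁻ t, Set.indicator (Set.Icc (-α) α) (fun t => ENNReal.ofReal (V * g t)) t :=
        lintegral_mono hslice
    _ = ∫⁻ t in Set.Icc (-α) α, ENNReal.ofReal (V * g t) :=
        lintegral_indicator measurableSet_Icc _
    _ = ENNReal.ofReal (∫ t in Set.Icc (-α) α, V * g t) := by
        rw [← ofReal_integral_eq_lintegral_ofReal]
        · apply Integrable.const_mul
          apply ContinuousOn.integrableOn_compact isCompact_Icc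
          apply Continuous.continuousOn
          fun_prop
        · rw [Filter.EventuallyLE, ae_restrict_iff' measurableSet_Icc]
          apply Filter.Eventually.of_forall
          intro t ht
          obtain ⟨ht1, ht2⟩ := ht
          have habs : t^2 ≤ α^2 := by nlinarith
          have hrR : |t| * (Real.sqrt (1-α^2)/α) ≤ Real.sqrt (1-t^2) := by
            have hr0 : 0 ≤ |t| * (Real.sqrt (1-α^2)/α) := by positivity
            rw [show |t| * (Real.sqrt (1-α^2)/α)
                = Real.sqrt ((|t| * (Real.sqrt (1-α^2)/α))^2) from (Real.sqrt_sq hr0).symm]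
            apply Real.sqrt_le_sqrt
            rw [mul_pow, div_pow, sq_abs, Real.sq_sqrt (by nlinarith : (0:ℝ) ≤ 1-α^2),
              show t^2 * ((1-α^2)/α^2) = t^2*(1-α^2)/α^2 by ring,
              div_le_iff₀ (by positivity : (0:ℝ) < α^2)]
            nlinarith
          have : 0 ≤ g t := by
            rw [hg]
            simp only
            apply sub_nonneg.mpr
            apply pow_le_pow_left₀ (by positivity) hrR
          positivity
    _ ≤ ENNReal.ofReal (V * (2*((k:ℝ)+1)*Real.arcsin α/((k:ℝ)+2))) := by
        apply ENNReal.ofReal_le_ofReal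
        rw [MeasureTheory.integral_Icc_eq_integral_Ioc,
          ← intervalIntegral.integral_of_le (by linarith : -α ≤ α),
          intervalIntegral.integral_const_mul]
        exact mul_le_mul_of_nonneg_left (integral_g_le k hα0 hα1) hV.le

theorem common_transversal_direction
    (d M : ℕ) (hd : 2 ≤ d) (hM : 1 ≤ M)
    (u : Fin M → EuclideanSpace ℝ (Fin d)) (hu : ∀ i, ‖u i‖ = 1)
    (α : ℝ) (hα0 : 0 < α) (hα1 : α < 1)
    (hα : Real.arcsin α < Real.sqrt Real.pi * Real.Gamma (((d : ℝ) - 1) / 2) /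
        (2 * (M : ℝ) * Real.Gamma ((d : ℝ) / 2))) :
    ∃ w : EuclideanSpace ℝ (Fin d), ‖w‖ = 1 ∧ ∀ i : Fin M, |(inner ℝ (u i) w : ℝ)| > α := by
  obtain ⟨k, rfl⟩ : ∃ k, d = k + 2 := ⟨d - 2, by omega⟩
  push_cast at hα
  rw [show ((k:ℝ)+2-1)/2 = ((k:ℝ)+1)/2 by ring] at hα
  set θ := Real.arcsin α with hθ
  have hθ0 : 0 < θ := Real.arcsin_pos.mpr hα0
  set G1 := Real.Gamma (((k:ℝ)+1)/2) with hG1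
  set G2 := Real.Gamma (((k:ℝ)+2)/2) with hG2
  have hG1p : 0 < G1 := Real.Gamma_pos_of_pos (by positivity)
  have hG2p : 0 < G2 := Real.Gamma_pos_of_pos (by positivity)
  have hsπ : 0 < Real.sqrt π := Real.sqrt_pos.mpr Real.pi_pos
  have hππ : Real.Gamma (((k:ℝ)+1)/2 + 1) = (((k:ℝ)+1)/2) * G1 :=
    Real.Gamma_add_one (by positivity)
  have hππ2 : Real.Gamma (((k:ℝ)+2)/2 + 1) = (((k:ℝ)+2)/2) * G2 :=
    Real.Gamma_add_one (by positivity)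
  set V : ℝ := Real.sqrt π ^ (k+1) / Real.Gamma (((k:ℝ)+1)/2 + 1) with hVdef
  set K : ℝ≥0∞ := ENNReal.ofReal (V * (2*((k:ℝ)+1)*θ/((k:ℝ)+2))) with hK
  set S : Set (Fin (k+2) → ℝ) :=
    {y | ∑ i, y i^2 ≤ 1 ∧ (y 0)^2 ≤ α^2 * ∑ i, y i^2} with hS
  have hSmeas : MeasurableSet S := by
    have hm1 : Measurable fun y : Fin (k+2) → ℝ => ∑ i, y i^2 := by
      apply Finset.measurable_sum
      intro j _
      fun_prop
    rw [hS, Set.setOf_and]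
    exact (measurableSet_le hm1 measurable_const).inter
      (measurableSet_le (by fun_prop) (hm1.const_mul _))
  set B : Fin M → Set (EuclideanSpace ℝ (Fin (k+2))) :=
    fun i => {x | ‖x‖ ≤ 1 ∧ |(inner ℝ (u i) x : ℝ)| ≤ α * ‖x‖} with hB
  have habs_iff : ∀ a c : ℝ, 0 ≤ c → (|a| ≤ c ↔ a^2 ≤ c^2) := by
    intro a c hc
    constructor
    · intro h
      nlinarith [abs_nonneg a, sq_abs a, abs_le.mp h]
    · intro h
      by_contra hlt
      push_neg at hlt
      nlinarith [sq_abs a, abs_nonneg a]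
  have hBvol : ∀ i, volume (B i) ≤ K := by
    intro i
    have hcard : Module.finrank ℝ (EuclideanSpace ℝ (Fin (k+2)))
        = Fintype.card (Fin (k+2)) := by
      simp [finrank_euclideanSpace]
    have horth : Orthonormal ℝ (Set.restrict {(0 : Fin (k+2))} (fun _ => u i)) := by
      rw [orthonormal_iff_ite]
      rintro ⟨a, ha⟩ ⟨b, hb⟩
      simp only [Set.mem_singleton_iff] at ha hb
      subst ha; subst hb
      simp only [Set.restrict_apply, if_pos rfl]
      rw [real_inner_self_eq_norm_sq]
      change ‖u i‖ ^ 2 = _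
      rw [hu i]
      norm_num
    obtain ⟨b, hb⟩ := horth.exists_orthonormalBasis_extension_of_card_eq hcard
    have hb0 : b 0 = u i := hb 0 rfl
    set F : EuclideanSpace ℝ (Fin (k+2)) → (Fin (k+2) → ℝ) :=
      fun x => (MeasurableEquiv.toLp 2 (Fin (k+2) → ℝ)).symm (b.repr x) with hF
    have hFmp : MeasurePreserving F volume volume :=
      (EuclideanSpace.volume_preserving_symm_measurableEquiv_toLp (Fin (k+2))).comp
        b.measurePreserving_repr
    have hpre : B i = F ⁻¹' S := by
      ext x
      have hy : ∀ j, (F x) j = (b.repr x) j := fun j => rfl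
      have hnorm2 : ∑ j, (F x) j ^2 = ‖x‖^2 := by
        have h1 : ‖b.repr x‖ = Real.sqrt (∑ j, (b.repr x) j^2) := by
          rw [EuclideanSpace.norm_eq]
          simp [Real.norm_eq_abs, sq_abs]
        have h2 : ‖b.repr x‖ = ‖x‖ := b.repr.norm_map x
        have h3 : (0:ℝ) ≤ ∑ j, (b.repr x) j^2 := Finset.sum_nonneg fun j _ => sq_nonneg _
        calc ∑ j, (F x) j ^2 = ∑ j, (b.repr x) j^2 := by simp [hy]
          _ = Real.sqrt (∑ j, (b.repr x) j^2) ^ 2 := (Real.sq_sqrt h3).symm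
          _ = ‖x‖^2 := by rw [← h1, h2]
      have hinner : (F x) 0 = (inner ℝ (u i) x : ℝ) := by
        rw [hy]
        have h4 : (inner ℝ (u i) x : ℝ) = inner ℝ (b.repr (u i)) (b.repr x) :=
          (b.repr.inner_map_map (u i) x).symm
        rw [h4, ← hb0, b.repr_self]
        rw [EuclideanSpace.inner_single_left]
        simp
      simp only [hB, hS, Set.mem_setOf_eq, Set.mem_preimage, hnorm2, hinner]
      constructor
      · rintro ⟨h1, h2⟩
        refine ⟨by nlinarith [norm_nonneg x], ?_⟩
        rw [show α^2 * ‖x‖^2 = (α*‖x‖)^2 by ring]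
        exact (habs_iff _ _ (by positivity)).mp h2
      · rintro ⟨h1, h2⟩
        have hn1 : ‖x‖ ≤ 1 := by nlinarith [norm_nonneg x]
        refine ⟨hn1, ?_⟩
        rw [habs_iff _ _ (by positivity)]
        nlinarith
    rw [hpre, hFmp.measure_preimage hSmeas.nullMeasurableSet]
    exact band_vol k hα0 hα1
  have hsum : volume (⋃ i, B i) ≤ (M : ℝ≥0∞) * K := by
    calc volume (⋃ i, B i) ≤ ∑' i : Fin M, volume (B i) := measure_iUnion_le _
      _ = ∑ i : Fin M, volume (B i) := tsum_fintype _
      _ ≤ ∑ _i : Fin M, K := Finset.sum_le_sum fun i _ => hBvol i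
      _ = (M : ℝ≥0∞) * K := by
          rw [Finset.sum_const, Finset.card_univ, Fintype.card_fin, nsmul_eq_mul]
  set W : ℝ := Real.sqrt π ^ (k+2) / Real.Gamma (((k:ℝ)+2)/2 + 1) with hW
  have hWpos : 0 < W := by
    rw [hW, hππ2]
    positivity
  have hvolball : volume (closedBall (0 : EuclideanSpace ℝ (Fin (k+2))) 1)
      = ENNReal.ofReal W := by
    rw [EuclideanSpace.volume_closedBall]
    simp only [Fintype.card_fin, ENNReal.ofReal_one, one_pow, one_mul]
    congr 1
    rw [hW]
    push_cast
    ring_nf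
  have hrange : 2 * (M:ℝ) * θ < Real.sqrt π * G1 / G2 := by
    have hM1 : (1:ℝ) ≤ (M:ℝ) := by exact_mod_cast hM
    have h2M : (0:ℝ) < 2 * (M:ℝ) * G2 := by positivity
    have h5 := (lt_div_iff₀ h2M).mp hα
    rw [lt_div_iff₀ hG2p]
    nlinarith
  have hlt : (M : ℝ≥0∞) * K < volume (closedBall (0 : EuclideanSpace ℝ (Fin (k+2))) 1) := by
    rw [hvolball, hK, ← ENNReal.ofReal_natCast, ← ENNReal.ofReal_mul (by positivity)]
    rw [ENNReal.ofReal_lt_ofReal_iff hWpos]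
    set c : ℝ := 2 * Real.sqrt π ^ (k+1) / (((k:ℝ)+2) * G1) with hc
    have hcpos : 0 < c := by positivity
    have h1 : (M:ℝ) * (V * (2*((k:ℝ)+1)*θ/((k:ℝ)+2))) = (2*(M:ℝ)*θ) * c := by
      rw [hVdef, hππ, hc]
      field_simp
    have h2 : W = (Real.sqrt π * G1 / G2) * c := by
      rw [hW, hππ2, hc, pow_succ]
      field_simp
    rw [h1, h2]
    exact mul_lt_mul_of_pos_right hrange hcpos
  have hnsub : ¬ (closedBall (0 : EuclideanSpace ℝ (Fin (k+2))) 1 ⊆ ⋃ i, B i) := by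
    intro hsub
    exact absurd (le_trans (measure_mono hsub) hsum) (not_le.mpr hlt)
  obtain ⟨x, hx1, hx2⟩ := Set.not_subset.mp hnsub
  rw [mem_closedBall, dist_zero_right] at hx1
  have hxgt : ∀ i, α * ‖x‖ < |(inner ℝ (u i) x : ℝ)| := by
    intro i
    by_contra hle
    push_neg at hle
    exact hx2 (Set.mem_iUnion.mpr ⟨i, ⟨hx1, hle⟩⟩)
  have hx0 : x ≠ 0 := by
    intro h
    have h6 := hxgt ⟨0, hM⟩
    rw [h] at h6
    simp only [inner_zero_right, abs_zero, norm_zero, mul_zero] at h6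
    exact lt_irrefl 0 h6
  have hxn : 0 < ‖x‖ := norm_pos_iff.mpr hx0
  refine ⟨‖x‖⁻¹ • x, ?_, ?_⟩
  · rw [norm_smul, norm_inv, norm_norm, inv_mul_cancel₀ hxn.ne']
  · intro i
    rw [real_inner_smul_right, abs_mul, abs_of_nonneg (by positivity : (0:ℝ) ≤ ‖x‖⁻¹)]
    calc α = ‖x‖⁻¹ * (α * ‖x‖) := by field_simp
      _ < ‖x‖⁻¹ * |(inner ℝ (u i) x : ℝ)| :=
          mul_lt_mul_of_pos_left (hxgt i) (inv_pos.mpr hxn)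
end

section
/- Let Φ ∈ L²(ℝ^d, ℂ) with Φ ≠ 0 as an element of L², and let (y_n) be a sequence in ℝ^d such that ‖Φ(· − y_n) − Φ‖_{L²} → 0 as n → ∞. Then y_n → 0. -/
open MeasureTheory Filter
open Metric Set
open scoped ENNReal

local notation "Sp" d => EuclideanSpace ℝ (Fin d)

lemma eLpNorm_translate (d : ℕ) (f : EuclideanSpace ℝ (Fin d) → ℂ)
    (hf : AEStronglyMeasurable f (volume : Measure (EuclideanSpace ℝ (Fin d))))
    (y : EuclideanSpace ℝ (Fin d)) :
    eLpNorm (fun x => f (x - y)) 2 volume = eLpNorm f 2 volume :=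
  eLpNorm_comp_measurePreserving hf (measurePreserving_sub_right volume y)

lemma decoupling (d : ℕ) (Φ : EuclideanSpace ℝ (Fin d) → ℂ)
    (hΦ : MemLp Φ 2 (volume : Measure (EuclideanSpace ℝ (Fin d))))
    (hN0 : eLpNorm Φ 2 (volume : Measure (EuclideanSpace ℝ (Fin d))) ≠ 0) :
    ∃ R : ℝ, ∀ y : EuclideanSpace ℝ (Fin d), R ≤ ‖y‖ →
      eLpNorm Φ 2 volume / 4 ≤ eLpNorm (fun x => Φ (x - y) - Φ x) 2 volume := by
  set N := eLpNorm Φ 2 (volume : Measure (EuclideanSpace ℝ (Fin d))) with hN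
  have hNt : N ≠ ⊤ := hΦ.2.ne
  set ε := N / 4 with hε
  have hε0 : ε ≠ 0 := by
    simp [hε, ENNReal.div_eq_zero_iff, hN0]
  have hεt : ε ≠ ⊤ := by
    simp [hε, ENNReal.div_eq_top, hNt]
  obtain ⟨g, g_supp, hg_close, g_cont, g_mem⟩ :=
    hΦ.exists_hasCompactSupport_eLpNorm_sub_le (by norm_num) hε0
  obtain ⟨R₀', hR₀'⟩ := g_supp.isCompact.isBounded.subset_closedBall 0
  set R₀ := max R₀' 0 with hR₀def
  have hR₀ : tsupport g ⊆ closedBall 0 R₀ :=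
    hR₀'.trans (closedBall_subset_closedBall (le_max_left _ _))
  refine ⟨2 * R₀ + 1, fun y hy => ?_⟩
  have hAESg : AEStronglyMeasurable g (volume : Measure (EuclideanSpace ℝ (Fin d))) :=
    g_cont.aestronglyMeasurable
  have hAESΦ := hΦ.1
  have hqmp : ∀ z : EuclideanSpace ℝ (Fin d),
      Measure.QuasiMeasurePreserving (fun x => x - z)
        (volume : Measure (EuclideanSpace ℝ (Fin d))) volume :=
    fun z => (measurePreserving_sub_right volume z).quasiMeasurePreserving
  -- g vanishes on the ball around y
  have hgA : ∀ x ∈ closedBall y R₀, g x = 0 := by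
    intro x hx
    by_contra hne
    have hx1 : x ∈ tsupport g := subset_tsupport g hne
    have hx2 : ‖x‖ ≤ R₀ := by simpa [mem_closedBall, dist_zero_right] using hR₀ hx1
    have : ‖y‖ ≤ 2 * R₀ := by
      calc ‖y‖ ≤ ‖y - x‖ + ‖x‖ := by
            simpa using norm_add_le (y - x) x
        _ ≤ R₀ + R₀ := by
            have : ‖y - x‖ = dist x y := by rw [dist_comm, dist_eq_norm]
            rw [this]
            exact add_le_add (mem_closedBall.1 hx) hx2
        _ = 2 * R₀ := by ring
    linarith
  -- key lower bound for g
  have hkey : eLpNorm g 2 volume ≤ eLpNorm (fun x => g (x - y) - g x) 2 volume := by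
    have hss : Function.support (fun x => g (x - y)) ⊆ closedBall y R₀ := by
      intro x hx
      have : x - y ∈ tsupport g := subset_tsupport g hx
      have : ‖x - y‖ ≤ R₀ := by simpa [mem_closedBall, dist_zero_right] using hR₀ this
      simpa [mem_closedBall, dist_eq_norm] using this
    calc eLpNorm g 2 volume
        = eLpNorm (fun x => g (x - y)) 2 volume := (eLpNorm_translate d g hAESg y).symm
      _ = eLpNorm ((closedBall y R₀).indicator (fun x => g (x - y))) 2 volume := by
          rw [Set.indicator_eq_self.2 hss]
      _ = eLpNorm (fun x => g (x - y)) 2 (volume.restrict (closedBall y R₀)) :=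
          eLpNorm_indicator_eq_eLpNorm_restrict measurableSet_closedBall
      _ = eLpNorm (fun x => g (x - y) - g x) 2 (volume.restrict (closedBall y R₀)) := by
          apply eLpNorm_congr_ae
          filter_upwards [ae_restrict_mem measurableSet_closedBall] with x hx
          rw [hgA x hx, sub_zero]
      _ ≤ eLpNorm (fun x => g (x - y) - g x) 2 volume :=
          eLpNorm_mono_measure _ Measure.restrict_le_self
  -- triangle inequality chain
  have htri : eLpNorm (fun x => g (x - y) - g x) 2 volume ≤
      ε + eLpNorm (fun x => Φ (x - y) - Φ x) 2 volume + ε := by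
    have h1 : (fun x : EuclideanSpace ℝ (Fin d) => g (x - y) - g x) =
        (fun x => (g (x - y) - Φ (x - y)) + (Φ (x - y) - Φ x) + (Φ x - g x)) := by
      funext x; ring
    rw [h1]
    have a1 : AEStronglyMeasurable (fun x : EuclideanSpace ℝ (Fin d) =>
        g (x - y) - Φ (x - y)) volume :=
      ((hAESg.sub hAESΦ).comp_quasiMeasurePreserving (hqmp y))
    have a2 : AEStronglyMeasurable (fun x : EuclideanSpace ℝ (Fin d) =>
        Φ (x - y) - Φ x) volume :=
      (hAESΦ.comp_quasiMeasurePreserving (hqmp y)).sub hAESΦ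
    have a3 : AEStronglyMeasurable (fun x : EuclideanSpace ℝ (Fin d) =>
        Φ x - g x) volume := hAESΦ.sub hAESg
    calc eLpNorm (fun x => (g (x - y) - Φ (x - y)) + (Φ (x - y) - Φ x) + (Φ x - g x)) 2 volume
        ≤ eLpNorm (fun x => (g (x - y) - Φ (x - y)) + (Φ (x - y) - Φ x)) 2 volume
          + eLpNorm (fun x => Φ x - g x) 2 volume :=
          eLpNorm_add_le (a1.add a2) a3 one_le_two
      _ ≤ (eLpNorm (fun x => g (x - y) - Φ (x - y)) 2 volume
          + eLpNorm (fun x => Φ (x - y) - Φ x) 2 volume)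
          + eLpNorm (fun x => Φ x - g x) 2 volume := by
          gcongr
          exact eLpNorm_add_le a1 a2 one_le_two
      _ ≤ ε + eLpNorm (fun x => Φ (x - y) - Φ x) 2 volume + ε := by
          gcongr
          · have : eLpNorm (fun x : EuclideanSpace ℝ (Fin d) => g (x - y) - Φ (x - y)) 2 volume
                = eLpNorm (fun x => g x - Φ x) 2 volume :=
              eLpNorm_translate d (fun x => g x - Φ x) (hAESg.sub hAESΦ) y
            rw [this]
            rw [show (fun x : EuclideanSpace ℝ (Fin d) => g x - Φ x) = -(Φ - g) from by funext x; simp [Pi.sub_apply]]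
            rw [eLpNorm_neg]
            exact hg_close
          · rw [show (fun x : EuclideanSpace ℝ (Fin d) => Φ x - g x) = Φ - g from rfl]
            exact hg_close
  -- N ≤ eLpNorm g + ε
  have hNg : N ≤ eLpNorm g 2 volume + ε := by
    have : (Φ : EuclideanSpace ℝ (Fin d) → ℂ) = fun x => (Φ x - g x) + g x := by funext x; ring
    calc N = eLpNorm (fun x => (Φ x - g x) + g x) 2 volume := by rw [← this]
      _ ≤ eLpNorm (fun x => Φ x - g x) 2 volume + eLpNorm g 2 volume :=
          eLpNorm_add_le (hAESΦ.sub hAESg) hAESg one_le_two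
      _ ≤ ε + eLpNorm g 2 volume := by
          gcongr
          exact hg_close
      _ = eLpNorm g 2 volume + ε := add_comm _ _
  -- combine
  have hfinal : ε + (ε + ε + ε) ≤ eLpNorm (fun x => Φ (x - y) - Φ x) 2 volume + (ε + ε + ε) := by
    have hNe : N = ε + (ε + ε + ε) := by
      rw [show ε + (ε + ε + ε) = ε * 4 from by ring, hε,
        ENNReal.div_mul_cancel (by norm_num) (by norm_num)]
    calc ε + (ε + ε + ε) = N := hNe.symm
      _ ≤ eLpNorm g 2 volume + ε := hNg
      _ ≤ eLpNorm (fun x => g (x - y) - g x) 2 volume + ε := by gcongr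
      _ ≤ (ε + eLpNorm (fun x => Φ (x - y) - Φ x) 2 volume + ε) + ε := by gcongr
      _ = eLpNorm (fun x => Φ (x - y) - Φ x) 2 volume + (ε + ε + ε) := by ring
  exact ENNReal.le_of_add_le_add_right
    (by simp [ENNReal.add_ne_top, hεt]) hfinal

theorem translation_convergence_implies_zero
    (d : ℕ)
    (Φ : EuclideanSpace ℝ (Fin d) → ℂ)
    (hΦ : MemLp Φ 2 (volume : Measure (EuclideanSpace ℝ (Fin d))))
    (hΦ0 : ¬ (Φ =ᵐ[(volume : Measure (EuclideanSpace ℝ (Fin d)))] 0))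
    (y : ℕ → EuclideanSpace ℝ (Fin d))
    (hy : Tendsto (fun n => eLpNorm (fun x => Φ (x - y n) - Φ x) 2
        (volume : Measure (EuclideanSpace ℝ (Fin d)))) atTop (nhds 0)) :
    Tendsto y atTop (nhds 0) := by
  haveI : Fact ((1:ℝ≥0∞) ≤ 2) := ⟨one_le_two⟩
  set e : EuclideanSpace ℝ (Fin d) → ℝ≥0∞ :=
    fun z => eLpNorm (fun x => Φ (x - z) - Φ x) 2 volume with he
  have hN0 : eLpNorm Φ 2 (volume : Measure (EuclideanSpace ℝ (Fin d))) ≠ 0 := by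
    intro h
    exact hΦ0 ((eLpNorm_eq_zero_iff hΦ.1 (by norm_num)).1 h)
  obtain ⟨R, hR⟩ := decoupling d Φ hΦ hN0
  set c : ℝ≥0∞ := eLpNorm Φ 2 (volume : Measure (EuclideanSpace ℝ (Fin d))) / 4 with hc
  have hc0 : 0 < c := by
    simp only [hc, pos_iff_ne_zero, ne_eq, ENNReal.div_eq_zero_iff, not_or]
    exact ⟨hN0, by norm_num⟩
  have hqmp : ∀ z : EuclideanSpace ℝ (Fin d),
      Measure.QuasiMeasurePreserving (fun x => x - z)
        (volume : Measure (EuclideanSpace ℝ (Fin d))) volume :=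
    fun z => (measurePreserving_sub_right volume z).quasiMeasurePreserving
  have hAESe : ∀ z : EuclideanSpace ℝ (Fin d),
      AEStronglyMeasurable (fun x => Φ (x - z) - Φ x)
        (volume : Measure (EuclideanSpace ℝ (Fin d))) :=
    fun z => (hΦ.1.comp_quasiMeasurePreserving (hqmp z)).sub hΦ.1
  -- no nonzero period
  have hnp : ∀ z : EuclideanSpace ℝ (Fin d), z ≠ 0 → e z ≠ 0 := by
    intro z hz h0
    have hper : (fun x => Φ (x - z)) =ᵐ[(volume : Measure (EuclideanSpace ℝ (Fin d)))] Φ := by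
      have := (eLpNorm_eq_zero_iff (hAESe z) (by norm_num)).1 h0
      have h2 : (fun x => Φ (x - z)) - Φ
          =ᵐ[(volume : Measure (EuclideanSpace ℝ (Fin d)))] 0 := this
      exact (sub_ae_eq_zero _ _).1 h2
    have hk : ∀ k : ℕ, (fun x => Φ (x - (k : ℝ) • z))
        =ᵐ[(volume : Measure (EuclideanSpace ℝ (Fin d)))] Φ := by
      intro k
      induction k with
      | zero => simp
      | succ k ih =>
        have hpull : (fun x => Φ ((x - z) - (k : ℝ) • z))
            =ᵐ[(volume : Measure (EuclideanSpace ℝ (Fin d)))] (fun x => Φ (x - z)) :=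
          (hqmp z).ae_eq_comp ih
        have harg : (fun x : EuclideanSpace ℝ (Fin d) => Φ ((x - z) - (k : ℝ) • z))
            = fun x => Φ (x - ((k : ℝ) + 1) • z) := by
          funext x
          congr 1
          rw [add_smul, one_smul]
          abel
        rw [harg] at hpull
        have : ((k + 1 : ℕ) : ℝ) = (k : ℝ) + 1 := by push_cast; ring
        rw [this]
        exact hpull.trans hper
    have hzpos : 0 < ‖z‖ := norm_pos_iff.2 hz
    obtain ⟨k, hk'⟩ := exists_nat_ge ((R + 1) / ‖z‖)
    have hnorm : R ≤ ‖(k : ℝ) • z‖ := by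
      rw [norm_smul, Real.norm_natCast]
      nlinarith [(div_le_iff₀ hzpos).1 hk']
    have hzero : e ((k : ℝ) • z) = 0 := by
      show eLpNorm (fun x => Φ (x - (k : ℝ) • z) - Φ x) 2 volume = 0
      have : (fun x => Φ (x - (k : ℝ) • z) - Φ x)
          =ᵐ[(volume : Measure (EuclideanSpace ℝ (Fin d)))] 0 := by
        filter_upwards [hk k] with x hx
        simp [hx]
      rw [eLpNorm_congr_ae this, eLpNorm_zero]
    have h3 : c ≤ e ((k : ℝ) • z) := hR _ hnorm
    rw [hzero] at h3
    exact absurd (le_antisymm h3 zero_le) hc0.ne'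
  -- continuity of e
  have hT : ∀ z : EuclideanSpace ℝ (Fin d), MeasurePreserving
      (fun x : EuclideanSpace ℝ (Fin d) => x - z) volume volume :=
    fun z => measurePreserving_sub_right volume z
  set T : EuclideanSpace ℝ (Fin d) → C(EuclideanSpace ℝ (Fin d), EuclideanSpace ℝ (Fin d)) :=
    fun z => ContinuousMap.mk (fun x => x - z) (by fun_prop) with hTdef
  have hTmp : ∀ z, MeasurePreserving (T z) (volume : Measure (EuclideanSpace ℝ (Fin d)))
      volume := fun z => hT z
  set F : Lp ℂ 2 (volume : Measure (EuclideanSpace ℝ (Fin d))) := hΦ.toLp Φ with hF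
  have contTF : Continuous fun z => Lp.compMeasurePreserving (T z) (hTmp z) F :=
    Continuous.compMeasurePreservingLp continuous_const
      (ContinuousMap.continuous_of_continuous_uncurry _ (continuous_snd.sub continuous_fst))
      hTmp (by norm_num)
  have e_eq : ∀ z, e z = edist (Lp.compMeasurePreserving (T z) (hTmp z) F) F := by
    intro z
    rw [Lp.edist_def, he]
    apply eLpNorm_congr_ae
    have h1 := Lp.coeFn_compMeasurePreserving F (hTmp z)
    have h2 : (⇑F ∘ (T z)) =ᵐ[(volume : Measure (EuclideanSpace ℝ (Fin d)))]
        (Φ ∘ (T z)) := (hqmp z).ae_eq_comp (hΦ.coeFn_toLp)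
    filter_upwards [h1, h2, hΦ.coeFn_toLp] with x hx1 hx2 hx3
    simp only [Pi.sub_apply]
    rw [hx1, hx2, hx3]
    rfl
  have e_cont : Continuous e := by
    simp only [funext e_eq]
    exact contTF.edist continuous_const
  -- main argument
  by_contra hcon
  rw [Metric.tendsto_atTop] at hcon
  push_neg at hcon
  obtain ⟨ε, hε, hfr⟩ := hcon
  have hfreq : ∃ᶠ n in atTop, ε ≤ ‖y n‖ := by
    rw [frequently_atTop]
    intro N
    obtain ⟨n, hn1, hn2⟩ := hfr N
    exact ⟨n, hn1, by simpa [dist_zero_right] using hn2⟩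
  have hsplit : (∃ᶠ n in atTop, R ≤ ‖y n‖) ∨
      (∃ᶠ n in atTop, ε ≤ ‖y n‖ ∧ ‖y n‖ ≤ R) := by
    refine frequently_or_distrib.1 (hfreq.mono fun n hn => ?_)
    rcases le_or_gt R ‖y n‖ with h | h
    · exact Or.inl h
    · exact Or.inr ⟨hn, h.le⟩
  have hev : ∀ᶠ n in atTop, e (y n) < c := hy.eventually_lt_const hc0
  rcases hsplit with hcase | hcase
  · obtain ⟨n, hn1, hn2⟩ := (hcase.and_eventually hev).exists
    exact absurd (hR (y n) hn1) (not_le.2 hn2)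
  · obtain ⟨φ, hφmono, hφ⟩ := extraction_of_frequently_atTop hcase
    have hmem : ∀ k, y (φ k) ∈ closedBall (0 : EuclideanSpace ℝ (Fin d)) R := by
      intro k
      simpa [mem_closedBall, dist_zero_right] using (hφ k).2
    obtain ⟨z, hzmem, ψ, hψmono, hlim⟩ :=
      (isCompact_closedBall (0 : EuclideanSpace ℝ (Fin d)) R).tendsto_subseq hmem
    have hz0 : z ≠ 0 := by
      have hnz : ε ≤ ‖z‖ :=
        ge_of_tendsto (hlim.norm) (Eventually.of_forall fun k => (hφ (ψ k)).1)
      intro h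
      rw [h, norm_zero] at hnz
      linarith
    have h1 : Tendsto (fun k => e (y (φ (ψ k)))) atTop (nhds (e z)) :=
      (e_cont.tendsto z).comp hlim
    have h2 : Tendsto (fun k => e (y (φ (ψ k)))) atTop (nhds 0) :=
      hy.comp ((hφmono.comp hψmono).tendsto_atTop)
    exact hnp z hz0 (tendsto_nhds_unique h1 h2)
end

section
/- Let f : ℂ → ℂ be twice continuously differentiable when viewed as a map ℝ² → ℝ², with f(0) = 0 and with the (real Fréchet) derivative of f at 0 equal to 0. Then for every R > 0 there exists a constant C = C(R) > 0 such that for all a, b ∈ ℂ with |a| ≤ R and |b| ≤ R one has |f(a + b) − f(a) − f(b)| ≤ C · |a| · |b|. -/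
theorem nonlinear_interaction_bound
    (f : ℂ → ℂ) (hf : ContDiff ℝ 2 f) (hf0 : f 0 = 0)
    (hdf0 : fderiv ℝ f 0 = 0) :
    ∀ R : ℝ, 0 < R → ∃ C : ℝ, 0 < C ∧
      ∀ a b : ℂ, ‖a‖ ≤ R → ‖b‖ ≤ R →
        ‖f (a + b) - f a - f b‖ ≤ C * ‖a‖ * ‖b‖ := by
  intro R hR
  set g : ℂ → ℂ →L[ℝ] ℂ := fderiv ℝ f with hg
  have hg1 : ContDiff ℝ 1 g := hf.fderiv_right (by norm_num)
  set s : Set ℂ := Metric.closedBall 0 (2 * R) with hs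
  have hsc : IsCompact s := isCompact_closedBall 0 (2 * R)
  have hscv : Convex ℝ s := convex_closedBall 0 (2 * R)
  obtain ⟨M, hM⟩ := hsc.exists_bound_of_continuousOn
    ((hg1.continuous_fderiv (by norm_num)).continuousOn (s := s))
  have hM0 : 0 ≤ M := by
    have := hM 0 (by simp [hs]; positivity)
    exact le_trans (norm_nonneg _) this
  -- Lipschitz bound on g over s
  have hlip : ∀ x ∈ s, ∀ y ∈ s, ‖g y - g x‖ ≤ M * ‖y - x‖ := by
    intro x hx y hy
    exact hscv.norm_image_sub_le_of_norm_fderiv_le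
      (fun z _ => (hg1.differentiable (by norm_num)) z) (fun z hz => hM z hz) hx hy
  have h0s : (0 : ℂ) ∈ s := by simp [hs]; positivity
  have hgb : ∀ x ∈ s, ‖g x‖ ≤ M * ‖x‖ := by
    intro x hx
    have := hlip 0 h0s x hx
    simpa [hdf0] using this
  refine ⟨M + 1, by positivity, ?_⟩
  intro a b ha hb
  have hfd : Differentiable ℝ f := hf.differentiable (by norm_num)
  set φ : ℝ → ℂ := fun t => f (a + t • b) - f (t • b) with hφ
  have hmem : ∀ t ∈ Set.Icc (0:ℝ) 1, a + t • b ∈ s ∧ t • b ∈ s := by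
    intro t ht
    constructor <;> simp only [hs, Metric.mem_closedBall, dist_zero_right]
    · calc ‖a + t • b‖ ≤ ‖a‖ + ‖t • b‖ := norm_add_le _ _
        _ ≤ R + 1 * R := by
            have : ‖t • b‖ = |t| * ‖b‖ := by rw [norm_smul, Real.norm_eq_abs]
            rw [this, abs_of_nonneg ht.1]
            exact add_le_add ha (mul_le_mul ht.2 hb (norm_nonneg _) zero_le_one)
        _ = 2 * R := by ring
    · calc ‖t • b‖ = |t| * ‖b‖ := by rw [norm_smul, Real.norm_eq_abs]
        _ ≤ 1 * R := by
            rw [abs_of_nonneg ht.1]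
            exact mul_le_mul ht.2 hb (norm_nonneg _) zero_le_one
        _ ≤ 2 * R := by linarith
  have hder : ∀ t ∈ Set.Icc (0:ℝ) 1,
      HasDerivWithinAt φ (g (a + t • b) b - g (t • b) b) (Set.Icc 0 1) t := by
    intro t ht
    have h1 : HasDerivAt (fun u : ℝ => a + u • b) b t := by
      simpa using ((hasDerivAt_id t).smul_const b).const_add a
    have h2 : HasDerivAt (fun u : ℝ => u • b) b t := by
      simpa using (hasDerivAt_id t).smul_const b
    have d1 : HasDerivAt (fun u : ℝ => f (a + u • b)) (g (a + t • b) b) t :=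
      (hfd (a + t • b)).hasFDerivAt.comp_hasDerivAt t h1
    have d2 : HasDerivAt (fun u : ℝ => f (u • b)) (g (t • b) b) t :=
      (hfd (t • b)).hasFDerivAt.comp_hasDerivAt t h2
    exact (d1.sub d2).hasDerivWithinAt
  have hbound : ∀ t ∈ Set.Icc (0:ℝ) 1,
      ‖g (a + t • b) b - g (t • b) b‖ ≤ M * ‖a‖ * ‖b‖ := by
    intro t ht
    obtain ⟨h1, h2⟩ := hmem t ht
    calc ‖g (a + t • b) b - g (t • b) b‖
        = ‖(g (a + t • b) - g (t • b)) b‖ := by simp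
      _ ≤ ‖g (a + t • b) - g (t • b)‖ * ‖b‖ := ContinuousLinearMap.le_opNorm _ _
      _ ≤ (M * ‖a‖) * ‖b‖ := by
          refine mul_le_mul_of_nonneg_right ?_ (norm_nonneg _)
          have := hlip (t • b) h2 (a + t • b) h1
          simpa using this
      _ = M * ‖a‖ * ‖b‖ := by ring
  have key := norm_image_sub_le_of_norm_deriv_le_segment' hder
    (fun t ht => hbound t (Set.Ico_subset_Icc_self ht)) 1
    (Set.mem_Icc.2 ⟨zero_le_one, le_rfl⟩)
  have hφ1 : φ 1 = f (a + b) - f b := by simp [hφ]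
  have hφ0 : φ 0 = f a := by simp [hφ, hf0]
  rw [hφ1, hφ0] at key
  have hkey : ‖f (a + b) - f a - f b‖ ≤ M * ‖a‖ * ‖b‖ := by
    have heq : f (a + b) - f a - f b = (f (a + b) - f b) - f a := by ring
    rw [heq]
    simpa using key
  refine hkey.trans ?_
  have : (0:ℝ) ≤ ‖a‖ * ‖b‖ := by positivity
  nlinarith
end

section
/- Let d ≥ 1 be an integer, let τ > 0, R > 0 and C_R ≥ 0. Let w : ℝ^d → ℝ be a nonnegative, twice continuously differentiable function such that w(x) → 0 as ‖x‖ → ∞, w(x) ≤ C_R for all x with ‖x‖ ≤ R, and Δw(x) ≥ (τ/2) · w(x) for all x with ‖x‖ > R. Then w(x) ≤ C_R · e^{√(τ/2) · (R − ‖x‖)} for all x ∈ ℝ^d. -/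
open Filter
open RealInnerProductSpace

theorem second_deriv_nonpos_of_isLocalMax {g g₁ : ℝ → ℝ} {a : ℝ}
    (hg : ∀ t, HasDerivAt g (g₁ t) t) (hg₁ : HasDerivAt g₁ a 0)
    (hmax : IsLocalMax g 0) : a ≤ 0 := by
  by_contra h
  push_neg at h
  have h0 : g₁ 0 = 0 := hmax.hasDerivAt_eq_zero (hg 0)
  have hs : Tendsto (fun t => g₁ t / t) (nhdsWithin 0 {(0:ℝ)}ᶜ) (nhds a) := by
    have := hasDerivAt_iff_tendsto_slope.mp hg₁
    simpa [slope_fun_def, h0, div_eq_inv_mul] using this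
  have hpos : ∀ᶠ t in nhdsWithin (0:ℝ) (Set.Ioi 0), 0 < g₁ t := by
    have h1 : ∀ᶠ t in nhdsWithin (0:ℝ) {(0:ℝ)}ᶜ, 0 < g₁ t / t :=
      hs.eventually (eventually_gt_nhds h)
    have h2 : ∀ᶠ t in nhdsWithin (0:ℝ) (Set.Ioi 0), 0 < g₁ t / t :=
      h1.filter_mono (nhdsWithin_mono 0 (fun t ht => ne_of_gt ht))
    filter_upwards [h2, self_mem_nhdsWithin] with t ht ht'
    have ht0 : (0:ℝ) < t := ht'
    by_contra hle
    push_neg at hle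
    nlinarith [div_nonpos_of_nonpos_of_nonneg hle ht0.le]
  obtain ⟨δ, hδmem, hδ⟩ := mem_nhdsGT_iff_exists_Ioc_subset.mp hpos
  have hδ0 : (0:ℝ) < δ := hδmem
  obtain ⟨δ', hδ'0, hδ'⟩ := Metric.eventually_nhds_iff.mp hmax
  set t := min δ (δ'/2) with ht
  have ht0 : 0 < t := lt_min hδ0 (by linarith)
  have hmono : StrictMonoOn g (Set.Icc 0 t) := by
    apply strictMonoOn_of_deriv_pos (convex_Icc 0 t)
    · exact (Continuous.continuousOn (by
        rw [continuous_iff_continuousAt]; exact fun s => (hg s).differentiableAt.continuousAt))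
    · intro s hs'
      rw [interior_Icc] at hs'
      rw [(hg s).deriv]
      exact hδ ⟨hs'.1, le_trans hs'.2.le (min_le_left _ _)⟩
  have hlt : g 0 < g t := hmono ⟨le_refl 0, ht0.le⟩ ⟨ht0.le, le_refl t⟩ ht0
  have : g t ≤ g 0 := by
    apply hδ'
    simp only [dist_zero_right, Real.norm_eq_abs, abs_of_pos ht0]
    calc t ≤ δ'/2 := min_le_right _ _
      _ < δ' := by linarith
  linarith

/-- The pointwise Laplacian of a function on `ℝ^d`: the sum of its unmixed second
partial derivatives in the coordinate directions. -/
noncomputable def laplacian {d : ℕ} {F : Type*} [NormedAddCommGroup F] [NormedSpace ℝ F]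
    (f : EuclideanSpace ℝ (Fin d) → F) (x : EuclideanSpace ℝ (Fin d)) : F :=
  ∑ i : Fin d, fderiv ℝ (fun y => fderiv ℝ f y (EuclideanSpace.single i 1)) x
    (EuclideanSpace.single i 1)

theorem maximum_principle_exponential_decay
    (d : ℕ) (hd : 1 ≤ d) (τ R CR : ℝ) (hτ : 0 < τ) (hR : 0 < R) (hCR : 0 ≤ CR)
    (w : EuclideanSpace ℝ (Fin d) → ℝ)
    (hw_nonneg : ∀ x, 0 ≤ w x)
    (hw_smooth : ContDiff ℝ 2 w)
    (hw_decay : Tendsto w (comap norm atTop) (nhds 0))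
    (hw_bound : ∀ x, ‖x‖ ≤ R → w x ≤ CR)
    (hw_sub : ∀ x, R < ‖x‖ → laplacian w x ≥ (τ / 2) * w x) :
    ∀ x : EuclideanSpace ℝ (Fin d), w x ≤ CR * Real.exp (Real.sqrt (τ / 2) * (R - ‖x‖)) := by
  intro x
  set μ := Real.sqrt (τ / 2) with hμdef
  have hμ0 : 0 ≤ μ := Real.sqrt_nonneg _
  have hμsq : μ * μ = τ / 2 := Real.mul_self_sqrt (by positivity)
  have hw_diff : Differentiable ℝ w := hw_smooth.differentiable (by norm_num)
  have hF_diff : ∀ i : Fin d,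
      Differentiable ℝ (fun y => fderiv ℝ w y (EuclideanSpace.single i (1:ℝ))) := by
    intro i
    have h1 : ContDiff ℝ 1 (fderiv ℝ w) := hw_smooth.fderiv_right (by norm_num)
    exact (h1.clm_apply contDiff_const).differentiable one_ne_zero
  by_cases hx : ‖x‖ ≤ R
  · have h1 : w x ≤ CR := hw_bound x hx
    have h2 : (1:ℝ) ≤ Real.exp (μ * (R - ‖x‖)) :=
      Real.one_le_exp (mul_nonneg hμ0 (by linarith))
    nlinarith
  · push_neg at hx
    have hx0 : x ≠ 0 := by
      intro h; rw [h, norm_zero] at hx; linarith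
    set e : EuclideanSpace ℝ (Fin d) := ‖x‖⁻¹ • x with hedef
    have he1 : ‖e‖ = 1 := norm_smul_inv_norm hx0
    have hee : ∑ i, e i * e i = 1 := by
      have h2 : ⟪e, e⟫ = ‖e‖ * ‖e‖ := real_inner_self_eq_norm_mul_norm e
      rw [he1] at h2
      have h3 : ⟪e, e⟫ = ∑ i, e i * e i := by
        simp only [PiLp.inner_apply, RCLike.inner_apply, conj_trivial]
      rw [h3] at h2; simpa using h2
    have hxe : ⟪x, e⟫ = ‖x‖ := by
      rw [hedef, real_inner_smul_right, real_inner_self_eq_norm_mul_norm]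
      field_simp [norm_ne_zero_iff.mpr hx0]
    have hsingle : ∀ i : Fin d, ⟪EuclideanSpace.single i (1:ℝ), e⟫ = e i := by
      intro i; simp [EuclideanSpace.inner_single_left]
    set v : EuclideanSpace ℝ (Fin d) → ℝ :=
      fun y => CR * Real.exp (μ * (R - ⟪y, e⟫)) with hvdef
    have hv_nonneg : ∀ y, 0 ≤ v y := fun y => by positivity
    have hv_cont : Continuous v := by
      apply continuous_const.mul
      exact Real.continuous_exp.comp (continuous_const.mul
        (continuous_const.sub (continuous_id.inner continuous_const)))
    have key : ∀ ε > 0, w x ≤ v x + ε := by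
      intro ε hε
      by_contra hcon
      push_neg at hcon
      -- get a radius M beyond which w < ε
      obtain ⟨s, hs, hsub⟩ := Filter.mem_comap.mp (hw_decay (Metric.ball_mem_nhds (0:ℝ) hε))
      obtain ⟨M, hM⟩ := Filter.mem_atTop_sets.mp hs
      have hMw : ∀ y : EuclideanSpace ℝ (Fin d), M ≤ ‖y‖ → w y < ε := by
        intro y hy
        have := hsub (hM _ hy)
        simp only [Set.mem_preimage, Metric.mem_ball, Real.dist_eq, sub_zero] at this
        exact lt_of_le_of_lt (le_abs_self _) this
      set u : EuclideanSpace ℝ (Fin d) → ℝ := fun y => w y - v y - ε with hudef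
      have hu_cont : Continuous u := ((hw_smooth.continuous).sub hv_cont).sub continuous_const
      have huy₀ : 0 < u x := by simp only [hudef]; linarith
      have hu_out : ∀ y : EuclideanSpace ℝ (Fin d), M ≤ ‖y‖ → u y < 0 := by
        intro y hy
        have h1 := hMw y hy
        have h2 := hv_nonneg y
        simp only [hudef]; linarith
      have hxK : x ∈ Metric.closedBall (0 : EuclideanSpace ℝ (Fin d)) M := by
        simp only [Metric.mem_closedBall, dist_zero_right]
        by_contra h
        push_neg at h
        exact absurd (hu_out x h.le) (not_lt.mpr huy₀.le)
      obtain ⟨x₀, hx₀K, hmax⟩ :=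
        (isCompact_closedBall (0 : EuclideanSpace ℝ (Fin d)) M).exists_isMaxOn
          ⟨x, hxK⟩ hu_cont.continuousOn
      have hux₀ : 0 < u x₀ := lt_of_lt_of_le huy₀ (hmax hxK)
      have hglob : ∀ y, u y ≤ u x₀ := by
        intro y
        by_cases hy : y ∈ Metric.closedBall (0 : EuclideanSpace ℝ (Fin d)) M
        · exact hmax hy
        · simp only [Metric.mem_closedBall, dist_zero_right, not_le] at hy
          exact le_of_lt (lt_trans (hu_out y hy.le) hux₀)
      have hx₀R : R < ‖x₀‖ := by
        by_contra h
        push_neg at h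
        have h1 : w x₀ ≤ CR := hw_bound x₀ h
        have h2 : ⟪x₀, e⟫ ≤ ‖x₀‖ := by
          calc ⟪x₀, e⟫ ≤ ‖x₀‖ * ‖e‖ := real_inner_le_norm x₀ e
            _ = ‖x₀‖ := by rw [he1, mul_one]
        have h3 : (1:ℝ) ≤ Real.exp (μ * (R - ⟪x₀, e⟫)) :=
          Real.one_le_exp (mul_nonneg hμ0 (by linarith))
        have h4 : CR ≤ v x₀ := by
          simp only [hvdef]; nlinarith
        simp only [hudef] at hux₀; linarith
      -- second derivative test along each coordinate direction
      set a₀ : ℝ := ⟪x₀, e⟫ with ha₀def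
      have hA : ∀ i : Fin d,
          fderiv ℝ (fun y => fderiv ℝ w y (EuclideanSpace.single i (1:ℝ))) x₀
              (EuclideanSpace.single i (1:ℝ))
            - CR * (μ * e i) * (μ * e i) * Real.exp (μ * (R - a₀)) ≤ 0 := by
        intro i
        set Ei : EuclideanSpace ℝ (Fin d) := EuclideanSpace.single i (1:ℝ) with hEidef
        set b : ℝ := e i with hbdef
        have hline : ∀ t : ℝ, HasDerivAt (fun s : ℝ => x₀ + s • Ei) Ei t := by
          intro t; simpa using ((hasDerivAt_id t).smul_const Ei).const_add x₀
        set g : ℝ → ℝ := fun t => w (x₀ + t • Ei)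
            - CR * Real.exp (μ * (R - (a₀ + t * b))) - ε with hgdef
        set g₁ : ℝ → ℝ := fun t => fderiv ℝ w (x₀ + t • Ei) Ei
            - CR * (Real.exp (μ * (R - (a₀ + t * b))) * (μ * -b)) with hg₁def
        have hinner : ∀ t : ℝ, ⟪x₀ + t • Ei, e⟫ = a₀ + t * b := by
          intro t
          rw [inner_add_left, real_inner_smul_left, hsingle i]
        have hexp : ∀ t : ℝ, HasDerivAt
            (fun s : ℝ => CR * Real.exp (μ * (R - (a₀ + s * b))))
            (CR * (Real.exp (μ * (R - (a₀ + t * b))) * (μ * -b))) t := by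
          intro t
          have hin : HasDerivAt (fun s : ℝ => μ * (R - (a₀ + s * b))) (μ * -b) t := by
            have := ((((hasDerivAt_id t).mul_const b).const_add a₀).const_sub R).const_mul μ
            simpa using this
          exact (hin.exp).const_mul CR
        have hg : ∀ t, HasDerivAt g (g₁ t) t := by
          intro t
          have p1 : HasDerivAt (fun s : ℝ => w (x₀ + s • Ei))
              (fderiv ℝ w (x₀ + t • Ei) Ei) t :=
            (hw_diff (x₀ + t • Ei)).hasFDerivAt.comp_hasDerivAt t (hline t)
          exact ((p1.sub (hexp t)).sub_const ε)
        have hg₁' : HasDerivAt g₁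
            (fderiv ℝ (fun y => fderiv ℝ w y Ei) x₀ Ei
              - CR * (Real.exp (μ * (R - a₀)) * (μ * -b)) * (μ * -b)) 0 := by
          have p1 : HasDerivAt (fun s : ℝ => fderiv ℝ w (x₀ + s • Ei) Ei)
              (fderiv ℝ (fun y => fderiv ℝ w y Ei) (x₀ + (0:ℝ) • Ei) Ei) 0 :=
            by have hh := ((hF_diff i) (x₀ + (0:ℝ) • Ei)).hasFDerivAt; exact hh.comp_hasDerivAt (0:ℝ) (hline 0)
          have p2 : HasDerivAt
              (fun s : ℝ => CR * (Real.exp (μ * (R - (a₀ + s * b))) * (μ * -b)))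
              (CR * (Real.exp (μ * (R - (a₀ + 0 * b))) * (μ * -b)) * (μ * -b)) 0 := by
            have := (hexp 0).mul_const (μ * -b)
            convert this using 2 <;> first | ring | rfl
          have := p1.sub p2
          simp only [zero_smul, add_zero, zero_mul] at this ⊢
          convert this using 1 <;> rfl
        have hgmax : IsLocalMax g 0 := by
          apply Filter.Eventually.of_forall
          intro t
          have h1 : g t = u (x₀ + t • Ei) := by
            simp only [hgdef, hudef, hvdef, hinner t]
          have h2 : g 0 = u x₀ := by
            have h0 : ((0:ℝ) • Ei : EuclideanSpace ℝ (Fin d)) = 0 := zero_smul _ _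
            simp only [hgdef, hudef, hvdef, h0, zero_mul, add_zero, ha₀def]
          rw [h1, h2]
          exact hglob _
        have := second_deriv_nonpos_of_isLocalMax hg hg₁' hgmax
        calc fderiv ℝ (fun y => fderiv ℝ w y Ei) x₀ Ei
              - CR * (μ * b) * (μ * b) * Real.exp (μ * (R - a₀))
            = fderiv ℝ (fun y => fderiv ℝ w y Ei) x₀ Ei
              - CR * (Real.exp (μ * (R - a₀)) * (μ * -b)) * (μ * -b) := by ring
          _ ≤ 0 := this
      have hsum : laplacian w x₀
          - CR * (τ / 2) * Real.exp (μ * (R - a₀)) ≤ 0 := by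
        have h1 : ∑ i : Fin d,
            (fderiv ℝ (fun y => fderiv ℝ w y (EuclideanSpace.single i (1:ℝ))) x₀
              (EuclideanSpace.single i (1:ℝ))
              - CR * (μ * e i) * (μ * e i) * Real.exp (μ * (R - a₀))) ≤ 0 :=
          Finset.sum_nonpos (fun i _ => hA i)
        rw [Finset.sum_sub_distrib] at h1
        have h2 : ∑ i : Fin d, CR * (μ * e i) * (μ * e i) * Real.exp (μ * (R - a₀))
            = CR * (τ / 2) * Real.exp (μ * (R - a₀)) := by
          have h3 : ∑ i : Fin d, CR * (μ * e i) * (μ * e i) * Real.exp (μ * (R - a₀))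
              = (∑ i : Fin d, e i * e i) * (CR * (μ * μ) * Real.exp (μ * (R - a₀))) := by
            rw [Finset.sum_mul]
            exact Finset.sum_congr rfl (fun i _ => by ring)
          rw [h3, hee, one_mul, hμsq]
        rw [h2] at h1
        simpa [laplacian] using h1
      have hlap := hw_sub x₀ hx₀R
      have hwv : w x₀ ≤ v x₀ := by
        have h1 : (τ / 2) * w x₀ ≤ (τ / 2) * v x₀ := by
          have : (τ / 2) * v x₀ = CR * (τ / 2) * Real.exp (μ * (R - a₀)) := by
            simp only [hvdef, ha₀def]; ring
          rw [this]
          linarith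
        have hτ2 : (0:ℝ) < τ / 2 := by linarith
        exact le_of_mul_le_mul_left h1 hτ2
      simp only [hudef] at hux₀
      linarith
    have hvx : v x = CR * Real.exp (μ * (R - ‖x‖)) := by
      simp only [hvdef, hxe]
    by_contra hcon
    push_neg at hcon
    obtain ⟨ε, hε1, hε2⟩ : ∃ ε > 0, v x + ε < w x := by
      refine ⟨(w x - CR * Real.exp (μ * (R - ‖x‖))) / 2, by linarith [hvx ▸ hcon], ?_⟩
      rw [hvx]; linarith
    exact absurd (key _ hε1) (not_le.mpr hε2)
end

section
/- Let H be a complex Banach space, let T₀ ∈ ℝ, λ > 0, C > 0, and K ≥ 0 with K ≤ λ/2. Let g : ℝ × H → H be continuous and satisfy, for all τ ≥ T₀ and all a, b ∈ H: ‖g(τ, a) − g(τ, b)‖ ≤ K ‖a − b‖ and ‖g(τ, 0)‖ ≤ C e^{−λτ}. Then there exists a unique continuous function v : [T₀, ∞) → H such that ‖v(t)‖ ≤ (2C/λ) e^{−λt} for all t ≥ T₀ and such that for all t ≥ T₀ the function τ ↦ g(τ, v(τ)) is Bochner integrable over [t, ∞) with v(t) = ∫_t^∞ g(τ, v(τ))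 dτ. -/
open MeasureTheory

/-- Integral of `exp (-b*x)` over `Ioi t`. -/
lemma aux_integral_exp_neg_mul_Ioi {b : ℝ} (hb : 0 < b) (t : ℝ) :
    ∫ x in Set.Ioi t, Real.exp (-b * x) = Real.exp (-b * t) / b := by
  have hderiv : ∀ x ∈ Set.Ici t,
      HasDerivAt (fun x => -Real.exp (-b * x) / b) (Real.exp (-b * x)) x := by
    intro x _
    have h1 : HasDerivAt (fun x : ℝ => -b * x) (-b) x := by
      simpa using (hasDerivAt_id x).const_mul (-b)
    have h2 : HasDerivAt (fun x => Real.exp (-b * x)) (Real.exp (-b * x) * (-b)) x :=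
      (Real.hasDerivAt_exp _).comp x h1
    have h3 := (h2.neg).div_const b
    convert h3 using 1
    all_goals first | rfl | field_simp | (funext y; simp [neg_div])
  have hint := exp_neg_integrableOn_Ioi t hb
  have htend : Filter.Tendsto (fun x => -Real.exp (-b * x) / b) Filter.atTop (nhds 0) := by
    have h1 : Filter.Tendsto (fun x : ℝ => b * x) Filter.atTop Filter.atTop :=
      Filter.Tendsto.const_mul_atTop hb Filter.tendsto_id
    have h2 : Filter.Tendsto (fun x : ℝ => Real.exp (-b * x)) Filter.atTop (nhds 0) := by
      have h3 := Real.tendsto_exp_neg_atTop_nhds_zero.comp h1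
      have h4 : ((fun x : ℝ => Real.exp (-x)) ∘ fun x : ℝ => b * x) =
          fun x : ℝ => Real.exp (-b * x) := by
        funext x; simp [Function.comp, neg_mul]
      rwa [h4] at h3
    have := (h2.neg).div_const b
    simpa using this
  have := MeasureTheory.integral_Ioi_of_hasDerivAt_of_tendsto' hderiv hint htend
  rw [this]
  ring

theorem fixed_point_exponential_decay
    {H : Type*} [NormedAddCommGroup H] [NormedSpace ℂ H] [CompleteSpace H]
    (T₀ lam C K : ℝ) (hlam : 0 < lam) (hC : 0 < C) (hK0 : 0 ≤ K) (hK : K ≤ lam / 2)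
    (g : ℝ × H → H) (hg : Continuous g)
    (hlip : ∀ τ ≥ T₀, ∀ a b : H, ‖g (τ, a) - g (τ, b)‖ ≤ K * ‖a - b‖)
    (h0 : ∀ τ ≥ T₀, ‖g (τ, 0)‖ ≤ C * Real.exp (-lam * τ)) :
    ∃ v : ℝ → H,
      (ContinuousOn v (Set.Ici T₀) ∧
        (∀ t ≥ T₀, ‖v t‖ ≤ (2 * C / lam) * Real.exp (-lam * t)) ∧
        (∀ t ≥ T₀, IntegrableOn (fun τ => g (τ, v τ)) (Set.Ici t) volume ∧
          v t = ∫ τ in Set.Ici t, g (τ, v τ))) ∧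
      ∀ v' : ℝ → H,
        ContinuousOn v' (Set.Ici T₀) →
        (∀ t ≥ T₀, ‖v' t‖ ≤ (2 * C / lam) * Real.exp (-lam * t)) →
        (∀ t ≥ T₀, IntegrableOn (fun τ => g (τ, v' τ)) (Set.Ici t) volume ∧
          v' t = ∫ τ in Set.Ici t, g (τ, v' τ)) →
        Set.EqOn v' v (Set.Ici T₀) := by
  classical
  set M : ℝ := 2 * C / lam with hMdef
  have hM : 0 < M := by positivity
  have hKM : K * M ≤ C := by
    have h1 : K * M ≤ (lam / 2) * M :=
      mul_le_mul_of_nonneg_right hK hM.le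
    have h2 : (lam / 2) * M = C := by
      rw [hMdef]; field_simp
    linarith
  -- the exponential weight is positive
  have hexp : ∀ x : ℝ, 0 < Real.exp x := Real.exp_pos
  -- Key integrability / bound lemma
  have keyA : ∀ u : ℝ → H, Continuous u →
      (∀ τ ≥ T₀, ‖u τ‖ ≤ M * Real.exp (-lam * τ)) →
      ∀ t ≥ T₀, IntegrableOn (fun τ => g (τ, u τ)) (Set.Ici t) volume ∧
        ‖∫ τ in Set.Ici t, g (τ, u τ)‖ ≤ M * Real.exp (-lam * t) := by
    intro u hu hub t ht
    have hcont : Continuous fun τ => g (τ, u τ) := hg.comp (continuous_id.prodMk hu)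
    have hbound : ∀ τ ∈ Set.Ici t, ‖g (τ, u τ)‖ ≤ 2 * C * Real.exp (-lam * τ) := by
      intro τ hτ
      have hτ0 : T₀ ≤ τ := le_trans ht hτ
      have h1 : ‖g (τ, u τ) - g (τ, 0)‖ ≤ K * ‖u τ‖ := by
        simpa using hlip τ hτ0 (u τ) 0
      have h2 := h0 τ hτ0
      have h3 : ‖u τ‖ ≤ M * Real.exp (-lam * τ) := hub τ hτ0
      have h4 : ‖g (τ, u τ)‖ ≤ ‖g (τ, u τ) - g (τ, 0)‖ + ‖g (τ, 0)‖ := by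
        have := norm_add_le (g (τ, u τ) - g (τ, 0)) (g (τ, 0))
        simpa using this
      have h5 : K * ‖u τ‖ ≤ K * (M * Real.exp (-lam * τ)) :=
        mul_le_mul_of_nonneg_left h3 hK0
      have he := (hexp (-lam * τ)).le
      nlinarith [hexp (-lam * τ)]
    have hD : IntegrableOn (fun τ => 2 * C * Real.exp (-lam * τ)) (Set.Ici t) volume := by
      rw [integrableOn_Ici_iff_integrableOn_Ioi]
      exact (exp_neg_integrableOn_Ioi t hlam).const_mul _
    have hae : ∀ᵐ τ ∂(volume.restrict (Set.Ici t)),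
        ‖g (τ, u τ)‖ ≤ 2 * C * Real.exp (-lam * τ) :=
      (ae_restrict_iff' measurableSet_Ici).mpr (Filter.Eventually.of_forall hbound)
    have hint : IntegrableOn (fun τ => g (τ, u τ)) (Set.Ici t) volume :=
      Integrable.mono' hD hcont.aestronglyMeasurable hae
    refine ⟨hint, ?_⟩
    have h6 : ‖∫ τ in Set.Ici t, g (τ, u τ)‖ ≤ ∫ τ in Set.Ici t, 2 * C * Real.exp (-lam * τ) :=
      norm_integral_le_of_norm_le hD hae
    have h7 : ∫ τ in Set.Ici t, 2 * C * Real.exp (-lam * τ) = M * Real.exp (-lam * t) := by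
      rw [MeasureTheory.integral_Ici_eq_integral_Ioi, MeasureTheory.integral_const_mul,
        aux_integral_exp_neg_mul_Ioi hlam t, hMdef]
      field_simp
    linarith
  -- decomposition lemma and continuity of the integral
  have keyB : ∀ u : ℝ → H, Continuous u →
      (∀ τ ≥ T₀, ‖u τ‖ ≤ M * Real.exp (-lam * τ)) →
      Continuous fun t => ∫ τ in Set.Ici (max t T₀), g (τ, u τ) := by
    intro u hu hub
    have hcont : Continuous fun τ => g (τ, u τ) := hg.comp (continuous_id.prodMk hu)
    have hGint := (keyA u hu hub T₀ le_rfl).1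
    have hdecomp : ∀ s, T₀ ≤ s → ∫ τ in Set.Ici s, g (τ, u τ) =
        (∫ τ in Set.Ici T₀, g (τ, u τ)) - ∫ τ in T₀..s, g (τ, u τ) := by
      intro s hs
      have h1 : IntegrableOn (fun τ => g (τ, u τ)) (Set.Ico T₀ s) volume :=
        hGint.mono_set Set.Ico_subset_Ici_self
      have h2 : IntegrableOn (fun τ => g (τ, u τ)) (Set.Ici s) volume :=
        hGint.mono_set (Set.Ici_subset_Ici.mpr hs)
      have hdisj : Disjoint (Set.Ico T₀ s) (Set.Ici s) := by
        rw [Set.disjoint_left]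
        intro x hx hx'
        exact absurd hx.2 (not_lt.mpr hx')
      have hun : Set.Ico T₀ s ∪ Set.Ici s = Set.Ici T₀ := Set.Ico_union_Ici_eq_Ici hs
      have h3 := MeasureTheory.setIntegral_union hdisj measurableSet_Ici h1 h2
        (f := fun τ => g (τ, u τ)) (μ := volume)
      rw [hun] at h3
      have h4 : ∫ τ in Set.Ico T₀ s, g (τ, u τ) = ∫ τ in T₀..s, g (τ, u τ) := by
        rw [intervalIntegral.integral_of_le hs, MeasureTheory.integral_Ico_eq_integral_Ioo,
          MeasureTheory.integral_Ioc_eq_integral_Ioo]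
      rw [h4] at h3
      rw [h3]
      abel
    have heq : (fun t => ∫ τ in Set.Ici (max t T₀), g (τ, u τ)) =
        fun t => (∫ τ in Set.Ici T₀, g (τ, u τ)) - ∫ τ in T₀..(max t T₀), g (τ, u τ) := by
      funext t
      exact hdecomp (max t T₀) (le_max_right _ _)
    rw [heq]
    have hprim : Continuous fun b => ∫ τ in T₀..b, g (τ, u τ) :=
      intervalIntegral.continuous_primitive (fun a b => hcont.intervalIntegrable a b) T₀
    exact continuous_const.sub (hprim.comp (continuous_id.max continuous_const))
  -- The weighted-to-unweighted map
  set U : (ℝ → H) → ℝ → H := fun w τ => Real.exp (-lam * max τ T₀) • w τ with hUdef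
  have hUcont : ∀ w : ℝ → H, Continuous w → Continuous (U w) := by
    intro w hw
    exact (Real.continuous_exp.comp
      ((continuous_const.mul (continuous_id.max continuous_const)))).smul hw
  have hUnorm : ∀ (w : ℝ → H) (τ : ℝ), ‖U w τ‖ = Real.exp (-lam * max τ T₀) * ‖w τ‖ := by
    intro w τ
    rw [hUdef]
    simp [norm_smul, Real.abs_exp]
  have hUbound : ∀ w : ℝ → H, (∀ τ, ‖w τ‖ ≤ M) →
      ∀ τ ≥ T₀, ‖U w τ‖ ≤ M * Real.exp (-lam * τ) := by
    intro w hw τ hτ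
    rw [hUnorm, max_eq_left hτ]
    have := mul_le_mul_of_nonneg_left (hw τ) (hexp (-lam * τ)).le
    linarith [this]
  -- the complete metric space: closed ball of radius M in BCF
  set S : Set (BoundedContinuousFunction ℝ H) := Metric.closedBall 0 M with hSdef
  have hS_closed : IsClosed S := Metric.isClosed_closedBall
  haveI : CompleteSpace S := hS_closed.completeSpace_coe
  haveI : Nonempty S := ⟨⟨0, Metric.mem_closedBall_self hM.le⟩⟩
  have memS : ∀ w : BoundedContinuousFunction ℝ H, w ∈ S ↔ ∀ t, ‖w t‖ ≤ M := by
    intro w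
    rw [hSdef, Metric.mem_closedBall, dist_zero_right, BoundedContinuousFunction.norm_le hM.le]
  -- facts about elements of S
  have hSfacts : ∀ w : S, Continuous (U ⇑(w : BoundedContinuousFunction ℝ H)) ∧
      (∀ τ ≥ T₀, ‖U ⇑(w : BoundedContinuousFunction ℝ H) τ‖ ≤ M * Real.exp (-lam * τ)) := by
    intro w
    refine ⟨hUcont _ (w : BoundedContinuousFunction ℝ H).continuous, ?_⟩
    exact hUbound _ ((memS _).mp w.2)
  -- the map Φ
  have hΦ_aux : ∀ w : S, ∃ y : S, ∀ t, ((y : BoundedContinuousFunction ℝ H) t : H) =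
      Real.exp (lam * max t T₀) •
        ∫ τ in Set.Ici (max t T₀), g (τ, U ⇑(w : BoundedContinuousFunction ℝ H) τ) := by
    intro w
    obtain ⟨hwc, hwb⟩ := hSfacts w
    set u := U ⇑(w : BoundedContinuousFunction ℝ H) with hudef
    have hcontF : Continuous fun t =>
        Real.exp (lam * max t T₀) • ∫ τ in Set.Ici (max t T₀), g (τ, u τ) :=
      ((Real.continuous_exp.comp
        (continuous_const.mul (continuous_id.max continuous_const)))).smul (keyB u hwc hwb)
    have hbnd : ∀ t, ‖Real.exp (lam * max t T₀) •
        ∫ τ in Set.Ici (max t T₀), g (τ, u τ)‖ ≤ M := by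
      intro t
      have hmt : T₀ ≤ max t T₀ := le_max_right _ _
      have h1 := (keyA u hwc hwb (max t T₀) hmt).2
      rw [norm_smul, Real.norm_eq_abs, Real.abs_exp]
      calc Real.exp (lam * max t T₀) * ‖∫ τ in Set.Ici (max t T₀), g (τ, u τ)‖
          ≤ Real.exp (lam * max t T₀) * (M * Real.exp (-lam * max t T₀)) :=
            mul_le_mul_of_nonneg_left h1 (hexp _).le
        _ = M * (Real.exp (lam * max t T₀) * Real.exp (-lam * max t T₀)) := by ring
        _ = M := by rw [← Real.exp_add]; simp
    refine ⟨⟨BoundedContinuousFunction.ofNormedAddCommGroup _ hcontF M hbnd, ?_⟩, ?_⟩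
    · exact (memS _).mpr (by intro t; simpa using hbnd t)
    · intro t; rfl
  choose Φ hΦ using hΦ_aux
  -- Lipschitz bound for Φ
  have hlipΦ : LipschitzWith (1/2 : NNReal) Φ := by
    apply LipschitzWith.of_dist_le_mul
    intro w₁ w₂
    set D := dist w₁ w₂ with hDdef
    have hD0 : 0 ≤ D := dist_nonneg
    have hhalf : ((1/2 : NNReal) : ℝ) = 1/2 := by norm_num
    rw [Subtype.dist_eq, BoundedContinuousFunction.dist_le (by rw [hhalf]; positivity)]
    intro t
    obtain ⟨hw1c, hw1b⟩ := hSfacts w₁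
    obtain ⟨hw2c, hw2b⟩ := hSfacts w₂
    set u₁ := U ⇑(w₁ : BoundedContinuousFunction ℝ H)
    set u₂ := U ⇑(w₂ : BoundedContinuousFunction ℝ H)
    set m := max t T₀ with hmdef
    have hmT : T₀ ≤ m := le_max_right _ _
    have hi1 := (keyA u₁ hw1c hw1b m hmT).1
    have hi2 := (keyA u₂ hw2c hw2b m hmT).1
    rw [dist_eq_norm, hΦ w₁ t, hΦ w₂ t, ← smul_sub]
    rw [← MeasureTheory.integral_sub hi1 hi2]
    have hptbound : ∀ τ ∈ Set.Ici m, ‖g (τ, u₁ τ) - g (τ, u₂ τ)‖ ≤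
        K * D * Real.exp (-lam * τ) := by
      intro τ hτ
      have hτT : T₀ ≤ τ := le_trans hmT hτ
      have h1 := hlip τ hτT (u₁ τ) (u₂ τ)
      have h2 : u₁ τ - u₂ τ = Real.exp (-lam * max τ T₀) •
          (((w₁ : BoundedContinuousFunction ℝ H) τ : H) -
            ((w₂ : BoundedContinuousFunction ℝ H) τ : H)) := by
        rw [smul_sub]
      have h3 : ‖u₁ τ - u₂ τ‖ ≤ Real.exp (-lam * τ) * D := by
        rw [h2, norm_smul, Real.norm_eq_abs, Real.abs_exp, max_eq_left hτT]
        have h4 : ‖((w₁ : BoundedContinuousFunction ℝ H) τ : H) -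
            ((w₂ : BoundedContinuousFunction ℝ H) τ : H)‖ ≤ D := by
          rw [← dist_eq_norm]
          exact BoundedContinuousFunction.dist_coe_le_dist τ
        exact mul_le_mul_of_nonneg_left h4 (hexp _).le
      calc ‖g (τ, u₁ τ) - g (τ, u₂ τ)‖ ≤ K * ‖u₁ τ - u₂ τ‖ := h1
        _ ≤ K * (Real.exp (-lam * τ) * D) := mul_le_mul_of_nonneg_left h3 hK0
        _ = K * D * Real.exp (-lam * τ) := by ring
    have hDint : IntegrableOn (fun τ => K * D * Real.exp (-lam * τ)) (Set.Ici m) volume := by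
      rw [integrableOn_Ici_iff_integrableOn_Ioi]
      exact (exp_neg_integrableOn_Ioi m hlam).const_mul _
    have hae : ∀ᵐ τ ∂(volume.restrict (Set.Ici m)),
        ‖g (τ, u₁ τ) - g (τ, u₂ τ)‖ ≤ K * D * Real.exp (-lam * τ) :=
      (ae_restrict_iff' measurableSet_Ici).mpr (Filter.Eventually.of_forall hptbound)
    have h5 : ‖∫ τ in Set.Ici m, (g (τ, u₁ τ) - g (τ, u₂ τ))‖ ≤
        ∫ τ in Set.Ici m, K * D * Real.exp (-lam * τ) :=
      norm_integral_le_of_norm_le hDint hae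
    have h6 : ∫ τ in Set.Ici m, K * D * Real.exp (-lam * τ) =
        K * D * (Real.exp (-lam * m) / lam) := by
      rw [MeasureTheory.integral_Ici_eq_integral_Ioi, MeasureTheory.integral_const_mul,
        aux_integral_exp_neg_mul_Ioi hlam m]
    rw [norm_smul, Real.norm_eq_abs, Real.abs_exp]
    calc Real.exp (lam * m) * ‖∫ τ in Set.Ici m, (g (τ, u₁ τ) - g (τ, u₂ τ))‖
        ≤ Real.exp (lam * m) * (K * D * (Real.exp (-lam * m) / lam)) := by
          apply mul_le_mul_of_nonneg_left _ (hexp _).le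
          rw [← h6]; exact h5
      _ = (K / lam) * D * (Real.exp (lam * m) * Real.exp (-lam * m)) := by
          field_simp
      _ = (K / lam) * D := by rw [← Real.exp_add]; simp
      _ ≤ (1/2) * D := by
          apply mul_le_mul_of_nonneg_right _ hD0
          rw [div_le_iff₀ hlam]; linarith
      _ = ((1/2 : NNReal) : ℝ) * D := by rw [hhalf]
  have hcontr : ContractingWith (1/2 : NNReal) Φ := ⟨by
    rw [show (1/2 : NNReal) = 2⁻¹ by norm_num]
    exact inv_lt_one_of_one_lt₀ one_lt_two, hlipΦ⟩
  -- the fixed point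
  set wstar := ContractingWith.fixedPoint Φ hcontr with hwstar
  have hfix : Φ wstar = wstar := hcontr.fixedPoint_isFixedPt
  obtain ⟨hwsc, hwsb⟩ := hSfacts wstar
  set v : ℝ → H := U ⇑(wstar : BoundedContinuousFunction ℝ H) with hvdef
  have hveq : ∀ t, ((wstar : BoundedContinuousFunction ℝ H) t : H) =
      Real.exp (lam * max t T₀) • ∫ τ in Set.Ici (max t T₀), g (τ, v τ) := by
    intro t
    conv_lhs => rw [← hfix]
    exact hΦ wstar t
  have hvformula : ∀ t ≥ T₀, v t = ∫ τ in Set.Ici t, g (τ, v τ) := by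
    intro t ht
    have hmax : max t T₀ = t := max_eq_left ht
    rw [hvdef]
    show Real.exp (-lam * max t T₀) • ((wstar : BoundedContinuousFunction ℝ H) t : H) = _
    rw [hveq t, hmax, smul_smul, ← Real.exp_add]
    norm_num
    rfl
  refine ⟨v, ⟨(hUcont _ (wstar : BoundedContinuousFunction ℝ H).continuous).continuousOn, ?_, ?_⟩, ?_⟩
  · intro t ht
    exact hwsb t ht
  · intro t ht
    exact ⟨(keyA v hwsc hwsb t ht).1, hvformula t ht⟩
  -- uniqueness
  · intro v' hv'c hv'b hv'int
    have hw'cont : Continuous fun t => Real.exp (lam * max t T₀) • v' (max t T₀) := by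
      have hmaxc : Continuous fun t : ℝ => max t T₀ := continuous_id.max continuous_const
      have hv'm : Continuous fun t => v' (max t T₀) :=
        hv'c.comp_continuous hmaxc (fun t => Set.mem_Ici.mpr (le_max_right _ _))
      exact (Real.continuous_exp.comp (continuous_const.mul hmaxc)).smul hv'm
    have hw'bnd : ∀ t, ‖Real.exp (lam * max t T₀) • v' (max t T₀)‖ ≤ M := by
      intro t
      have hmT : T₀ ≤ max t T₀ := le_max_right _ _
      rw [norm_smul, Real.norm_eq_abs, Real.abs_exp]
      calc Real.exp (lam * max t T₀) * ‖v' (max t T₀)‖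
          ≤ Real.exp (lam * max t T₀) * (M * Real.exp (-lam * max t T₀)) :=
            mul_le_mul_of_nonneg_left (hv'b _ hmT) (hexp _).le
        _ = M * (Real.exp (lam * max t T₀) * Real.exp (-lam * max t T₀)) := by ring
        _ = M := by rw [← Real.exp_add]; simp
    set w' : BoundedContinuousFunction ℝ H :=
      BoundedContinuousFunction.ofNormedAddCommGroup _ hw'cont M hw'bnd with hw'def
    have hw'coe : ∀ t, (w' t : H) = Real.exp (lam * max t T₀) • v' (max t T₀) := fun t => rfl
    have hw'S : w' ∈ S := (memS _).mpr (fun t => by rw [hw'coe]; exact hw'bnd t)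
    have hUw' : ∀ τ ≥ T₀, U ⇑w' τ = v' τ := by
      intro τ hτ
      have hmax : max τ T₀ = τ := max_eq_left hτ
      show Real.exp (-lam * max τ T₀) • (w' τ : H) = v' τ
      rw [hw'coe, hmax, smul_smul, ← Real.exp_add]
      norm_num
    have hfix' : Φ ⟨w', hw'S⟩ = ⟨w', hw'S⟩ := by
      apply Subtype.ext
      apply BoundedContinuousFunction.ext
      intro t
      have h1 := hΦ ⟨w', hw'S⟩ t
      set m := max t T₀ with hmdef
      have hmT : T₀ ≤ m := le_max_right _ _
      have h2 : ∫ τ in Set.Ici m,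
          g (τ, U (⇑((⟨w', hw'S⟩ : S) : BoundedContinuousFunction ℝ H)) τ) =
          ∫ τ in Set.Ici m, g (τ, v' τ) := by
        apply MeasureTheory.setIntegral_congr_fun measurableSet_Ici
        intro τ hτ
        have := hUw' τ (le_trans hmT hτ)
        simp only [Function.comp]
        exact congrArg (fun z => g (τ, z)) this
      rw [h1, h2, ← (hv'int m hmT).2, hw'coe]
    have hw'eq : (⟨w', hw'S⟩ : S) = wstar := hcontr.fixedPoint_unique hfix'
    intro t ht
    have hmax : max t T₀ = t := max_eq_left ht
    have h3 : (w' t : H) = ((wstar : BoundedContinuousFunction ℝ H) t : H) := by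
      rw [← hw'eq]
    have h4 : (w' t : H) = Real.exp (lam * t) • v' t := by
      rw [hw'coe, hmax]
    have h5 : v t = Real.exp (-lam * t) • ((wstar : BoundedContinuousFunction ℝ H) t : H) := by
      rw [hvdef]
      show Real.exp (-lam * max t T₀) • _ = _
      rw [hmax]
    rw [h5, ← h3, h4, smul_smul, ← Real.exp_add]
    norm_num
end

section
/- Let d ≥ 1, let g : ℝ → ℝ be continuously differentiable, let R : ℝ^d → ℂ be continuous, and let v : ℝ^d → ℂ be twice continuously differentiable with compact support. Then Re ∫_{ℝ^d} i · ( Δv(x) + g(|R(x)|²) v(x) + 2 g′(|R(x)|²) Re(R(x) · conj(v(x))) · R(x) ) · conj(v(x)) dx = −2 ∫_{ℝ^d} g′(|R(x)|²) · Re(R(x) · conj(v(x))) · Im(R(x) · conj(v(x))) dx. -/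
open MeasureTheory

lemma integral_fderiv_apply_eq_zero' {d : ℕ} {w : EuclideanSpace ℝ (Fin d) → ℝ}
    (hw : ContDiff ℝ 1 w) (hsupp : HasCompactSupport w) (u : EuclideanSpace ℝ (Fin d)) :
    ∫ x, fderiv ℝ w x u = 0 := by
  obtain ⟨C, hC⟩ := ContDiff.lipschitzWith_of_hasCompactSupport hsupp hw one_ne_zero
  have h1 : LipschitzWith 0 (fun _ : EuclideanSpace ℝ (Fin d) => (1:ℝ)) :=
    LipschitzWith.const _
  have key := LipschitzWith.integral_lineDeriv_mul_eq (μ := volume) h1 hC hsupp u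
  have hL : ∀ x : EuclideanSpace ℝ (Fin d),
      lineDeriv ℝ (fun _ : EuclideanSpace ℝ (Fin d) => (1:ℝ)) x u = 0 := by
    intro x
    simpa using (differentiableAt_const (1:ℝ)).lineDeriv_eq_fderiv (x := x) (v := u)
  have hR : ∀ x : EuclideanSpace ℝ (Fin d),
      lineDeriv ℝ w x (-u) = -(fderiv ℝ w x u) := by
    intro x
    rw [(hw.differentiable one_ne_zero x).lineDeriv_eq_fderiv, map_neg]
  simp only [hL, hR, zero_mul, mul_one, integral_zero] at key
  rw [← neg_eq_zero, ← integral_neg]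
  exact key.symm

theorem linearized_cancellation_identity
    (d : ℕ) (hd : 1 ≤ d)
    (g : ℝ → ℝ) (hg : ContDiff ℝ 1 g)
    (R : EuclideanSpace ℝ (Fin d) → ℂ) (hR : Continuous R)
    (v : EuclideanSpace ℝ (Fin d) → ℂ) (hv : ContDiff ℝ 2 v)
    (hvsupp : HasCompactSupport v) :
    (∫ x : EuclideanSpace ℝ (Fin d),
        Complex.I * (laplacian v x + (g (‖R x‖ ^ 2) : ℂ) * v x +
          ((2 * deriv g (‖R x‖ ^ 2) *
            (R x * (starRingEnd ℂ) (v x)).re : ℝ) : ℂ) * R x) *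
          (starRingEnd ℂ) (v x)).re =
      -2 * ∫ x : EuclideanSpace ℝ (Fin d),
        deriv g (‖R x‖ ^ 2) * (R x * (starRingEnd ℂ) (v x)).re *
          (R x * (starRingEnd ℂ) (v x)).im := by
  set e : Fin d → EuclideanSpace ℝ (Fin d) := fun i => EuclideanSpace.single i 1 with he
  set u : Fin d → EuclideanSpace ℝ (Fin d) → ℂ := fun i y => fderiv ℝ v y (e i) with hu_def
  set w : Fin d → EuclideanSpace ℝ (Fin d) → ℝ :=
    fun i y => (u i y * (starRingEnd ℂ) (v y)).im with hw_def
  have hv1 : ContDiff ℝ 1 v := hv.of_le one_le_two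
  have hvd : Differentiable ℝ v := hv1.differentiable one_ne_zero
  have hu : ∀ i, ContDiff ℝ 1 (u i) := fun i =>
    (hv.fderiv_right (m := 1) le_rfl).clm_apply contDiff_const
  have hconj : ContDiff ℝ 1 (fun y => (starRingEnd ℂ) (v y)) :=
    Complex.conjCLE.toContinuousLinearMap.contDiff.comp hv1
  have hw : ∀ i, ContDiff ℝ 1 (w i) := fun i =>
    Complex.imCLM.contDiff.comp ((hu i).mul hconj)
  have hwsupp : ∀ i, HasCompactSupport (w i) := by
    intro i
    apply hvsupp.mono
    intro y hy
    simp only [Function.mem_support, hw_def] at hy ⊢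
    intro h
    simp [h] at hy
  -- key pointwise derivative identity
  have hkey : ∀ (i : Fin d) (x : EuclideanSpace ℝ (Fin d)),
      fderiv ℝ (w i) x (e i) = ((fderiv ℝ (u i) x (e i)) * (starRingEnd ℂ) (v x)).im := by
    intro i x
    have hux : HasFDerivAt (u i) (fderiv ℝ (u i) x) x :=
      (((hu i).differentiable one_ne_zero) x).hasFDerivAt
    have hvx : HasFDerivAt v (fderiv ℝ v x) x := (hvd x).hasFDerivAt
    have hcx : HasFDerivAt (fun y => (starRingEnd ℂ) (v y))
        (Complex.conjCLE.toContinuousLinearMap.comp (fderiv ℝ v x)) x :=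
      (Complex.conjCLE.toContinuousLinearMap.hasFDerivAt).comp x hvx
    have hm := hux.mul hcx
    have him' : HasFDerivAt (w i)
        (Complex.imCLM.comp (u i x • (Complex.conjCLE.toContinuousLinearMap).comp (fderiv ℝ v x) +
          (starRingEnd ℂ) (v x) • fderiv ℝ (u i) x)) x :=
      (Complex.imCLM.hasFDerivAt).comp x hm
    rw [him'.fderiv]
    have h0 : (u i x * (starRingEnd ℂ) (u i x)).im = 0 := by
      rw [Complex.mul_conj]; simp
    simp only [ContinuousLinearMap.comp_apply, ContinuousLinearMap.add_apply,
      ContinuousLinearMap.smul_apply, Complex.imCLM_apply, smul_eq_mul]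
    rw [show (Complex.conjCLE.toContinuousLinearMap : ℂ →L[ℝ] ℂ) ((fderiv ℝ v x) (e i)) =
      (starRingEnd ℂ) (u i x) from rfl, Complex.add_im, h0, zero_add, mul_comm]
  -- pointwise identity for the real part of the integrand
  have hpt : ∀ x : EuclideanSpace ℝ (Fin d),
      (Complex.I * (laplacian v x + (g (‖R x‖ ^ 2) : ℂ) * v x +
          ((2 * deriv g (‖R x‖ ^ 2) *
            (R x * (starRingEnd ℂ) (v x)).re : ℝ) : ℂ) * R x) *
          (starRingEnd ℂ) (v x)).re
        = (-(∑ i, fderiv ℝ (w i) x (e i))) +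
          (-2) * (deriv g (‖R x‖ ^ 2) * (R x * (starRingEnd ℂ) (v x)).re *
            (R x * (starRingEnd ℂ) (v x)).im) := by
    intro x
    have hsum : (∑ i, fderiv ℝ (w i) x (e i))
        = ((laplacian v x) * (starRingEnd ℂ) (v x)).im := by
      have hlap : laplacian v x = ∑ i, fderiv ℝ (u i) x (e i) := rfl
      rw [hlap, Finset.sum_mul, Complex.im_sum]
      exact Finset.sum_congr rfl fun i _ => hkey i x
    rw [hsum]
    simp only [Complex.mul_re, Complex.mul_im, Complex.add_re, Complex.add_im,
      Complex.I_re, Complex.I_im, Complex.ofReal_re, Complex.ofReal_im,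
      Complex.conj_re, Complex.conj_im]
    ring
  -- continuity and integrability facts
  have hlapfun : laplacian v = fun x => ∑ i, fderiv ℝ (u i) x (e i) := rfl
  have hucont : ∀ i, Continuous (fun x => fderiv ℝ (u i) x (e i)) := fun i =>
    (ContinuousLinearMap.apply ℝ ℂ (e i)).continuous.comp ((hu i).continuous_fderiv one_ne_zero)
  have hlapcont : Continuous (laplacian v) := by
    rw [hlapfun]
    exact continuous_finset_sum _ fun i _ => hucont i
  have hgc : Continuous (fun x => (g (‖R x‖ ^ 2) : ℂ)) :=
    Complex.continuous_ofReal.comp (hg.continuous.comp ((continuous_norm.comp hR).pow 2))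
  have hdgc : Continuous (fun x => deriv g (‖R x‖ ^ 2)) :=
    (hg.continuous_deriv le_rfl).comp ((continuous_norm.comp hR).pow 2)
  have hconjv : Continuous (fun x => (starRingEnd ℂ) (v x)) :=
    Complex.continuous_conj.comp hv1.continuous
  have hRecont : Continuous (fun x => (R x * (starRingEnd ℂ) (v x)).re) :=
    Complex.continuous_re.comp (hR.mul hconjv)
  have hImcont : Continuous (fun x => (R x * (starRingEnd ℂ) (v x)).im) :=
    Complex.continuous_im.comp (hR.mul hconjv)
  have hFcont : Continuous (fun x => Complex.I * (laplacian v x +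
      (g (‖R x‖ ^ 2) : ℂ) * v x +
      ((2 * deriv g (‖R x‖ ^ 2) *
        (R x * (starRingEnd ℂ) (v x)).re : ℝ) : ℂ) * R x) * (starRingEnd ℂ) (v x)) := by
    apply Continuous.mul _ hconjv
    apply continuous_const.mul
    exact (hlapcont.add (hgc.mul hv1.continuous)).add
      ((Complex.continuous_ofReal.comp ((continuous_const.mul hdgc).mul hRecont)).mul hR)
  have hFsupp : HasCompactSupport (fun x => Complex.I * (laplacian v x +
      (g (‖R x‖ ^ 2) : ℂ) * v x +
      ((2 * deriv g (‖R x‖ ^ 2) *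
        (R x * (starRingEnd ℂ) (v x)).re : ℝ) : ℂ) * R x) * (starRingEnd ℂ) (v x)) := by
    apply hvsupp.mono
    intro y hy
    simp only [Function.mem_support] at hy ⊢
    intro h
    simp [h] at hy
  have hFint := hFcont.integrable_of_hasCompactSupport (μ := volume) hFsupp
  have hre : (∫ x, Complex.I * (laplacian v x +
      (g (‖R x‖ ^ 2) : ℂ) * v x +
      ((2 * deriv g (‖R x‖ ^ 2) *
        (R x * (starRingEnd ℂ) (v x)).re : ℝ) : ℂ) * R x) * (starRingEnd ℂ) (v x)).re =
      ∫ x, (Complex.I * (laplacian v x +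
      (g (‖R x‖ ^ 2) : ℂ) * v x +
      ((2 * deriv g (‖R x‖ ^ 2) *
        (R x * (starRingEnd ℂ) (v x)).re : ℝ) : ℂ) * R x) * (starRingEnd ℂ) (v x)).re :=
    (integral_re hFint).symm
  rw [hre, integral_congr_ae (Filter.Eventually.of_forall hpt)]
  -- integrability of the two pieces
  have hAint : ∀ i, Integrable (fun x => fderiv ℝ (w i) x (e i)) volume := by
    intro i
    apply Continuous.integrable_of_hasCompactSupport
    · exact (ContinuousLinearMap.apply ℝ ℝ (e i)).continuous.comp ((hw i).continuous_fderiv one_ne_zero)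
    · exact (hwsupp i).fderiv_apply ℝ (e i)
  have hBcont : Continuous (fun x => deriv g (‖R x‖ ^ 2) *
      (R x * (starRingEnd ℂ) (v x)).re * (R x * (starRingEnd ℂ) (v x)).im) :=
    (hdgc.mul hRecont).mul hImcont
  have hBsupp : HasCompactSupport (fun x => deriv g (‖R x‖ ^ 2) *
      (R x * (starRingEnd ℂ) (v x)).re * (R x * (starRingEnd ℂ) (v x)).im) := by
    apply hvsupp.mono
    intro y hy
    simp only [Function.mem_support] at hy ⊢
    intro h
    simp [h] at hy
  have hBint := hBcont.integrable_of_hasCompactSupport (μ := volume) hBsupp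
  have hsumint : Integrable (fun x => ∑ i, fderiv ℝ (w i) x (e i)) :=
    integrable_finset_sum _ fun i _ => hAint i
  have hnegint : Integrable (fun x => -(∑ i, fderiv ℝ (w i) x (e i))) volume := hsumint.neg
  rw [integral_add hnegint (hBint.const_mul (-2)), integral_neg,
    integral_finset_sum _ fun i _ => hAint i, integral_const_mul]
  have : ∀ i : Fin d, (∫ x, fderiv ℝ (w i) x (e i)) = 0 := fun i =>
    integral_fderiv_apply_eq_zero' (hw i) (hwsupp i) (e i)
  simp [this]
end
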